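/- arXiv:math/0107066 — 7 statements merged into one kernel-verified Lean document; each statement's English description precedes it below -/
import Mathlib

section
/- Let m and n be integers with 2 ≤ m ≤ n. Then there exists an m-by-n array in which each symbol appears at most ⌊(mn - 1)/(m - 1)⌋ + 1 times and which has no latin transversal. (Equivalently, L(m,n) ≤ (mn - 1)/(m - 1).) -/
theorem stmt_2 (m n : ℕ) (hm : 2 ≤ m) (hmn : m ≤ n) :
    ∃ f : Fin m → Fin n → ℕ,
      (∀ s : ℕ, (Finset.univ.filter (fun p : Fin m × Fin n => f p.1 p.2 = s)).card ≤
        (m * n - 1) / (m - 1) + 1) ∧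
      ¬ ∃ σ : Fin m → Fin n, Function.Injective σ ∧
          Function.Injective (fun i => f i (σ i)) := by
  classical
  have hm1 : 0 < m - 1 := by omega
  have hn : 0 < n := by omega
  refine ⟨fun i j => (i.val * n + j.val) % (m - 1), ?_, ?_⟩
  · intro s
    have hcard : (Finset.univ.filter
        (fun p : Fin m × Fin n => (p.1.val * n + p.2.val) % (m - 1) = s)).card ≤
        (Finset.range ((m * n - 1) / (m - 1) + 1)).card := by
      apply Finset.card_le_card_of_injOn (fun p => (p.1.val * n + p.2.val) / (m - 1))
      · intro p hp
        have h1 : p.1.val * n + p.2.val < m * n := by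
          have h2 : p.1.val + 1 ≤ m := p.1.isLt
          calc p.1.val * n + p.2.val < p.1.val * n + n := by omega
            _ = (p.1.val + 1) * n := by ring
            _ ≤ m * n := Nat.mul_le_mul_right n h2
        have h3 : (p.1.val * n + p.2.val) / (m - 1) ≤ (m * n - 1) / (m - 1) :=
          Nat.div_le_div_right (by omega)
        simp only [Finset.mem_range]
        rw [Finset.mem_coe, Finset.mem_range]
        omega
      · intro p hp q hq h
        simp only [Finset.mem_coe, Finset.mem_filter] at hp hq
        have hp2 := Nat.div_add_mod (p.1.val * n + p.2.val) (m - 1)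
        have hq2 := Nat.div_add_mod (q.1.val * n + q.2.val) (m - 1)
        have h' : (p.1.val * n + p.2.val) / (m - 1) = (q.1.val * n + q.2.val) / (m - 1) := h
        have heq : p.1.val * n + p.2.val = q.1.val * n + q.2.val := by
          rw [h', hp.2] at hp2
          rw [hq.2] at hq2
          omega
        have hpn : p.2.val < n := p.2.isLt
        have hqn : q.2.val < n := q.2.isLt
        have hi : p.1.val = q.1.val := by
          by_contra hne
          rcases Nat.lt_or_ge p.1.val q.1.val with hlt | hge
          · have : (p.1.val + 1) * n ≤ q.1.val * n := Nat.mul_le_mul_right n (by omega)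
            nlinarith
          · have hlt : q.1.val < p.1.val := by omega
            have : (q.1.val + 1) * n ≤ p.1.val * n := Nat.mul_le_mul_right n (by omega)
            nlinarith
        have hj : p.2.val = q.2.val := by
          rw [hi] at heq; omega
        exact Prod.ext (Fin.ext hi) (Fin.ext hj)
    simpa using hcard
  · rintro ⟨σ, hσ, hinj⟩
    have h1 : (Finset.univ.image (fun i : Fin m => (i.val * n + (σ i).val) % (m - 1))).card
        = m := by
      rw [Finset.card_image_of_injective _ hinj, Finset.card_univ, Fintype.card_fin]
    have h2 : (Finset.univ.image (fun i : Fin m => (i.val * n + (σ i).val) % (m - 1)))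
        ⊆ Finset.range (m - 1) := by
      intro x hx
      simp only [Finset.mem_image] at hx
      obtain ⟨i, -, rfl⟩ := hx
      exact Finset.mem_range.mpr (Nat.mod_lt _ hm1)
    have := Finset.card_le_card h2
    rw [h1, Finset.card_range] at this
    omega
end

section
/- Let n ≥ 3 be an integer. Then every 2-by-n array in which each symbol appears at most 2n - 1 times has a latin transversal. (Equivalently, L(2,n) ≥ 2n - 1 for n ≥ 3.) -/
theorem stmt_4 (n : ℕ) (hn : 3 ≤ n) (f : Fin 2 → Fin n → ℕ)
    (h : ∀ s : ℕ, (Finset.univ.filter (fun p : Fin 2 × Fin n => f p.1 p.2 = s)).card ≤ 2 * n - 1) :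
    ∃ σ : Fin 2 → Fin n, Function.Injective σ ∧
      Function.Injective (fun i => f i (σ i)) := by
  have hn0 : (0 : ℕ) < n := by omega
  have hn1 : (1 : ℕ) < n := by omega
  have hn2 : (2 : ℕ) < n := by omega
  set a : Fin n := ⟨0, hn0⟩ with ha
  set b : Fin n := ⟨1, hn1⟩ with hb
  set c2 : Fin n := ⟨2, hn2⟩ with hc2
  have hab : a ≠ b := by simp [ha, hb, Fin.ext_iff]
  have hac : a ≠ c2 := by simp [ha, hc2, Fin.ext_iff]
  have hbc : b ≠ c2 := by simp [hb, hc2, Fin.ext_iff]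
  have key : ∃ j k : Fin n, j ≠ k ∧ f 0 j ≠ f 1 k := by
    by_contra hk
    push_neg at hk
    have hk' : ∀ j k : Fin n, j ≠ k → f 0 j = f 1 k := fun j k h' => hk j k h'
    set c := f 1 a with hc
    have hrow1 : ∀ k : Fin n, f 1 k = c := by
      intro k
      obtain ⟨j, hjk, hja⟩ : ∃ j : Fin n, j ≠ k ∧ j ≠ a := by
        by_cases h' : b = k
        · exact ⟨c2, by rw [← h']; exact hbc.symm, hac.symm⟩
        · exact ⟨b, h', hab.symm⟩
      rw [← hk' j k hjk, hk' j a hja]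
    have hrow0 : ∀ j : Fin n, f 0 j = c := by
      intro j
      by_cases h' : j = a
      · rw [h', hk' a b hab, hrow1 b]
      · rw [hk' j a h']
    have hcard : (Finset.univ.filter (fun p : Fin 2 × Fin n => f p.1 p.2 = c)).card = 2 * n := by
      have huniv : (Finset.univ.filter (fun p : Fin 2 × Fin n => f p.1 p.2 = c)) = Finset.univ := by
        ext p
        obtain ⟨i, jj⟩ := p
        simp only [Finset.mem_filter, Finset.mem_univ, true_and, iff_true]
        fin_cases i
        · exact hrow0 jj
        · exact hrow1 jj
      rw [huniv]
      simp [Finset.card_univ]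
    have := h c
    omega
  obtain ⟨j, k, hjk, hfjk⟩ := key
  refine ⟨![j, k], ?_, ?_⟩
  · intro i i' hii'
    fin_cases i <;> fin_cases i' <;> simp_all
  · intro i i' hii'
    fin_cases i <;> fin_cases i' <;> simp_all
end

section
/- Every 3-by-4 array in which each symbol appears at most 3 times has a latin transversal. (Together with the upper bound from Parker's construction, this gives L(3,4) = 3.) -/
abbrev Cell := Fin 3 × Fin 4

def memB (p a b c : Cell) : Bool := p == a || p == b || p == c

def badT (a b c : Cell) : Finset (Fin 4 × Fin 4 × Fin 4) :=
  Finset.univ.filter (fun t =>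
    (t.1 != t.2.1 && t.1 != t.2.2 && t.2.1 != t.2.2 &&
    ((memB (0, t.1) a b c && memB (1, t.2.1) a b c) ||
     (memB (0, t.1) a b c && memB (2, t.2.2) a b c) ||
     (memB (1, t.2.1) a b c && memB (2, t.2.2) a b c))) = true)

def BadFor (C : Finset Cell) : Finset (Fin 3 → Fin 4) :=
  Finset.univ.filter (fun σ => Function.Injective σ ∧
    ∃ i j : Fin 3, i ≠ j ∧ (i, σ i) ∈ C ∧ (j, σ j) ∈ C)

set_option maxHeartbeats 4000000 in
lemma key : ∀ a b c : Cell, 3 * (badT a b c).card ≤ 4 * ({a, b, c} : Finset Cell).card := by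
  decide

lemma memB_iff (p a b c : Cell) : memB p a b c = true ↔ p ∈ ({a, b, c} : Finset Cell) := by
  simp only [memB, Bool.or_eq_true, beq_iff_eq, Finset.mem_insert, Finset.mem_singleton, or_assoc]

lemma bridge (a b c : Cell) : (BadFor {a, b, c}).card ≤ (badT a b c).card := by
  apply Finset.card_le_card_of_injOn (fun σ => (σ 0, σ 1, σ 2))
  · intro σ hσ
    simp only [BadFor, Finset.mem_coe, Finset.mem_filter, Finset.mem_univ, true_and] at hσ
    obtain ⟨hinj, i, j, hij, hi, hj⟩ := hσ
    simp only [badT, Finset.mem_coe, Finset.mem_filter, Finset.mem_univ, true_and,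
      Bool.and_eq_true, Bool.or_eq_true, bne_iff_ne, ne_eq, memB_iff]
    have h01 : σ 0 ≠ σ 1 := fun e => absurd (hinj e) (by decide)
    have h02 : σ 0 ≠ σ 2 := fun e => absurd (hinj e) (by decide)
    have h12 : σ 1 ≠ σ 2 := fun e => absurd (hinj e) (by decide)
    refine ⟨⟨⟨h01, h02⟩, h12⟩, ?_⟩
    fin_cases i <;> fin_cases j <;> simp_all
  · intro σ hσ τ hτ hst
    simp only [Prod.mk.injEq] at hst
    funext i
    fin_cases i <;> [exact hst.1; exact hst.2.1; exact hst.2.2]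

lemma combo (a b c : Cell) : 3 * (BadFor {a, b, c}).card ≤ 4 * ({a, b, c} : Finset Cell).card :=
  le_trans (Nat.mul_le_mul_left 3 (bridge a b c)) (key a b c)

lemma perC (C : Finset Cell) (hC : C.card ≤ 3) : 3 * (BadFor C).card ≤ 4 * C.card := by
  rcases (show C.card = 0 ∨ C.card = 1 ∨ C.card = 2 ∨ C.card = 3 by omega) with h0 | h1 | h2 | h3
  · obtain rfl := Finset.card_eq_zero.mp h0
    have : BadFor (∅ : Finset Cell) = ∅ := by
      ext σ; simp [BadFor]
    simp [this]
  · obtain ⟨a, rfl⟩ := Finset.card_eq_one.mp h1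
    simpa using combo a a a
  · obtain ⟨a, b, hab, rfl⟩ := Finset.card_eq_two.mp h2
    simpa using combo a a b
  · obtain ⟨a, b, c, _, _, _, rfl⟩ := Finset.card_eq_three.mp h3
    exact combo a b c

set_option maxHeartbeats 1000000 in
theorem stmt_6 (f : Fin 3 → Fin 4 → ℕ)
    (h : ∀ s : ℕ, (Finset.univ.filter (fun p : Fin 3 × Fin 4 => f p.1 p.2 = s)).card ≤ 3) :
    ∃ σ : Fin 3 → Fin 4, Function.Injective σ ∧
      Function.Injective (fun i => f i (σ i)) := by
  set Good := Finset.univ.filter (fun σ : Fin 3 → Fin 4 =>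
      Function.Injective σ ∧ Function.Injective fun i => f i (σ i)) with hGood
  suffices hne : Good.Nonempty by
    obtain ⟨σ, hσ⟩ := hne
    rw [hGood, Finset.mem_filter] at hσ
    exact ⟨σ, hσ.2⟩
  rw [← Finset.card_pos]
  set Bad := Finset.univ.filter (fun σ : Fin 3 → Fin 4 =>
      Function.Injective σ ∧ ¬ Function.Injective fun i => f i (σ i)) with hBad
  have hInj : (Finset.univ.filter (fun σ : Fin 3 → Fin 4 => Function.Injective σ)).card = 24 := by
    decide
  have hsplit : (Finset.univ.filter (fun σ : Fin 3 → Fin 4 => Function.Injective σ)) ⊆ Good ∪ Bad := by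
    intro σ hσ
    simp only [hGood, hBad, Finset.mem_filter, Finset.mem_union, Finset.mem_univ, true_and] at *
    by_cases hi : Function.Injective fun i => f i (σ i)
    · exact Or.inl ⟨hσ, hi⟩
    · exact Or.inr ⟨hσ, hi⟩
  have h24 : 24 ≤ Good.card + Bad.card := by
    calc 24 = _ := hInj.symm
      _ ≤ (Good ∪ Bad).card := Finset.card_le_card hsplit
      _ ≤ Good.card + Bad.card := Finset.card_union_le _ _
  obtain ⟨img, himg⟩ : ∃ Y, Y = Finset.univ.image (fun p : Cell => f p.1 p.2) := ⟨_, rfl⟩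
  have hBadsub : Bad ⊆ img.biUnion
      (fun s => BadFor (Finset.univ.filter (fun p : Cell => f p.1 p.2 = s))) := by
    intro σ hσ
    rw [hBad] at hσ
    obtain ⟨hinj, hni⟩ := (Finset.mem_filter.mp hσ).2
    rw [Function.not_injective_iff] at hni
    obtain ⟨i, j, hfij, hij⟩ := hni
    refine Finset.mem_biUnion.mpr ⟨f i (σ i), ?_, ?_⟩
    · rw [himg]
      exact Finset.mem_image.mpr ⟨(i, σ i), Finset.mem_univ _, rfl⟩
    · exact Finset.mem_filter.mpr ⟨Finset.mem_univ _, hinj, i, j, hij,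
        Finset.mem_filter.mpr ⟨Finset.mem_univ _, rfl⟩,
        Finset.mem_filter.mpr ⟨Finset.mem_univ _, hfij.symm⟩⟩
  have hBadcard : Bad.card ≤ ∑ s ∈ img,
      (BadFor (Finset.univ.filter (fun p : Cell => f p.1 p.2 = s))).card :=
    le_trans (Finset.card_le_card hBadsub) (Finset.card_biUnion_le)
  have hsum : ∑ s ∈ img, (Finset.univ.filter (fun p : Cell => f p.1 p.2 = s)).card = 12 := by
    rw [himg]
    have := Finset.card_eq_sum_card_image (fun p : Cell => f p.1 p.2) (Finset.univ : Finset Cell)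
    simpa using this.symm
  have h48 : 3 * Bad.card ≤ 48 := by
    calc 3 * Bad.card
        ≤ 3 * ∑ s ∈ img, (BadFor (Finset.univ.filter (fun p : Cell => f p.1 p.2 = s))).card :=
          Nat.mul_le_mul_left _ hBadcard
      _ = ∑ s ∈ img, 3 * (BadFor (Finset.univ.filter (fun p : Cell => f p.1 p.2 = s))).card :=
          Finset.mul_sum _ _ _
      _ ≤ ∑ s ∈ img, 4 * (Finset.univ.filter (fun p : Cell => f p.1 p.2 = s)).card :=
          Finset.sum_le_sum (fun s _ => perC _ (h s))
      _ = 4 * ∑ s ∈ img, (Finset.univ.filter (fun p : Cell => f p.1 p.2 = s)).card :=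
          (Finset.mul_sum _ _ _).symm
      _ = 48 := by rw [hsum]
  omega
end

section
/- Let n ≥ 4 be an integer and let f be a 3-by-n array that has no latin transversal. If some symbol appears in f at least once and at most 3 times, then some symbol appears in f at least 2n - 2 times (and hence at least 3n/2 times). -/
open Finset

lemma fin3_cover : ∀ p q r i : Fin 3, p ≠ q → p ≠ r → q ≠ r → p = i ∨ q = i ∨ r = i := by
  decide

lemma other_rows : ∀ p : Fin 3, ∃ q r : Fin 3, p ≠ q ∧ p ≠ r ∧ q ≠ r := by decide

lemma exists_ne3 {n : ℕ} (hn : 4 ≤ n) (a b c : Fin n) : ∃ d : Fin n, d ≠ a ∧ d ≠ b ∧ d ≠ c := by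
  have h1 : ({a, b, c} : Finset (Fin n)).card ≤ 3 := by
    have := Finset.card_insert_le a ({b, c} : Finset (Fin n))
    have := Finset.card_insert_le b ({c} : Finset (Fin n))
    simp at *; omega
  have h2 : (Finset.univ \ {a, b, c} : Finset (Fin n)).Nonempty := by
    rw [← Finset.card_pos, Finset.card_sdiff_of_subset (Finset.subset_univ _), Finset.card_univ,
      Fintype.card_fin]
    omega
  obtain ⟨d, hd⟩ := h2
  rw [Finset.mem_sdiff] at hd
  simp only [Finset.mem_insert, Finset.mem_singleton, not_or] at hd
  exact ⟨d, hd.2.1, hd.2.2.1, hd.2.2.2⟩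

lemma exists_two_ne {n : ℕ} (hn : 4 ≤ n) (a b : Fin n) :
    ∃ x1 x2 : Fin n, x1 ≠ x2 ∧ x1 ≠ a ∧ x1 ≠ b ∧ x2 ≠ a ∧ x2 ≠ b := by
  have h1 : ({a, b} : Finset (Fin n)).card ≤ 2 := by
    have := Finset.card_insert_le a ({b} : Finset (Fin n)); simp at *; omega
  have h2 : 1 < (Finset.univ \ {a, b} : Finset (Fin n)).card := by
    rw [Finset.card_sdiff_of_subset (Finset.subset_univ _), Finset.card_univ, Fintype.card_fin]
    omega
  obtain ⟨x1, hx1, x2, hx2, h12⟩ := Finset.one_lt_card.mp h2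
  rw [Finset.mem_sdiff] at hx1 hx2
  simp only [Finset.mem_insert, Finset.mem_singleton, not_or] at hx1 hx2
  exact ⟨x1, x2, h12, hx1.2.1, hx1.2.2, hx2.2.1, hx2.2.2⟩

lemma key_s7 {n : ℕ} {f : Fin 3 → Fin n → ℕ}
    (hno : ¬ ∃ σ : Fin 3 → Fin n, Function.Injective σ ∧
        Function.Injective (fun i => f i (σ i)))
    (p q r : Fin 3) (hpq : p ≠ q) (hpr : p ≠ r) (hqr : q ≠ r)
    (cp cq cr : Fin n) (h1 : cp ≠ cq) (h2 : cp ≠ cr) (h3 : cq ≠ cr) :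
    f p cp = f q cq ∨ f p cp = f r cr ∨ f q cq = f r cr := by
  by_contra hc
  push_neg at hc
  obtain ⟨e1, e2, e3⟩ := hc
  apply hno
  classical
  refine ⟨fun i => if i = p then cp else if i = q then cq else cr, ?_, ?_⟩
  · intro i j hij
    simp only at hij
    rcases fin3_cover p q r i hpq hpr hqr with rfl | rfl | rfl <;>
      rcases fin3_cover p q r j hpq hpr hqr with rfl | rfl | rfl <;>
      simp [hpq, hpr, hqr, Ne.symm hpq, Ne.symm hpr, Ne.symm hqr] at hij ⊢ <;>
      first
        | rfl
        | exact absurd hij h1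
        | exact absurd hij h2
        | exact absurd hij h3
        | exact absurd hij.symm h1
        | exact absurd hij.symm h2
        | exact absurd hij.symm h3
  · intro i j hij
    simp only at hij
    rcases fin3_cover p q r i hpq hpr hqr with rfl | rfl | rfl <;>
      rcases fin3_cover p q r j hpq hpr hqr with rfl | rfl | rfl <;>
      simp [hpq, hpr, hqr, Ne.symm hpq, Ne.symm hpr, Ne.symm hqr] at hij ⊢ <;>
      first
        | rfl
        | exact absurd hij e1
        | exact absurd hij e2
        | exact absurd hij e3
        | exact absurd hij.symm e1
        | exact absurd hij.symm e2
        | exact absurd hij.symm e3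

lemma pivotK {n : ℕ} {f : Fin 3 → Fin n → ℕ} {s : ℕ}
    (K : ∀ p q r : Fin 3, p ≠ q → p ≠ r → q ≠ r → ∀ cp cq cr : Fin n,
      cp ≠ cq → cp ≠ cr → cq ≠ cr →
      f p cp = f q cq ∨ f p cp = f r cr ∨ f q cq = f r cr)
    (p q r : Fin 3) (hpq : p ≠ q) (hpr : p ≠ r) (hqr : q ≠ r)
    (a : Fin n) (ha : f p a = s) :
    ∀ x y : Fin n, x ≠ a → y ≠ a → x ≠ y →
      f q x = s ∨ f r y = s ∨ f q x = f r y := by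
  intro x y hx hy hxy
  rcases K p q r hpq hpr hqr a x y (Ne.symm hx) (Ne.symm hy) hxy with h | h | h
  · exact Or.inl (h.symm.trans ha)
  · exact Or.inr (Or.inl (h.symm.trans ha))
  · exact Or.inr (Or.inr h)

lemma mem3 {α : Type*} [DecidableEq α] {T : Finset α} (hT : T.card ≤ 3) {e1 e2 e3 : α}
    (h1 : e1 ∈ T) (h2 : e2 ∈ T) (h3 : e3 ∈ T)
    (d12 : e1 ≠ e2) (d13 : e1 ≠ e3) (d23 : e2 ≠ e3) :
    ∀ e ∈ T, e = e1 ∨ e = e2 ∨ e = e3 := by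
  intro e he
  by_contra h
  push_neg at h
  obtain ⟨ne1, ne2, ne3⟩ := h
  have hsub : ({e, e1, e2, e3} : Finset α) ⊆ T := by
    intro x hx
    simp only [Finset.mem_insert, Finset.mem_singleton] at hx
    rcases hx with rfl | rfl | rfl | rfl <;> assumption
  have hc : ({e, e1, e2, e3} : Finset α).card = 4 := by
    rw [Finset.card_insert_of_notMem (by simp [ne1, ne2, ne3]),
      Finset.card_insert_of_notMem (by simp [d12, d13]),
      Finset.card_insert_of_notMem (by simp [d23]), Finset.card_singleton]
  have := Finset.card_le_card hsub
  omega

lemma three_rows {n : ℕ} (f : Fin 3 → Fin n → ℕ) (v : ℕ) (p q r : Fin 3)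
    (hpq : p ≠ q) (hpr : p ≠ r) (hqr : q ≠ r)
    (Sp Sq Sr : Finset (Fin n))
    (hp : ∀ c ∈ Sp, f p c = v) (hq : ∀ c ∈ Sq, f q c = v) (hr : ∀ c ∈ Sr, f r c = v) :
    Sp.card + Sq.card + Sr.card ≤
      (Finset.univ.filter fun x : Fin 3 × Fin n => f x.1 x.2 = v).card := by
  classical
  set A := Sp.image (fun c => (p, c)) with hA
  set B := Sq.image (fun c => (q, c)) with hB
  set C := Sr.image (fun c => (r, c)) with hC
  have hinj : ∀ i : Fin 3, Function.Injective (fun c : Fin n => (i, c)) := by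
    intro i c1 c2 h; simpa using h
  have hAB : Disjoint A B := by
    rw [Finset.disjoint_left]
    rintro x hx hx'
    simp only [hA, hB, Finset.mem_image] at hx hx'
    obtain ⟨c, _, rfl⟩ := hx
    obtain ⟨c', _, h⟩ := hx'
    exact hpq (congrArg Prod.fst h).symm
  have hABC : Disjoint (A ∪ B) C := by
    rw [Finset.disjoint_left]
    rintro x hx hx'
    simp only [hA, hB, hC, Finset.mem_union, Finset.mem_image] at hx hx'
    obtain ⟨c', _, h⟩ := hx'
    rcases hx with ⟨c, _, rfl⟩ | ⟨c, _, rfl⟩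
    · exact hpr (congrArg Prod.fst h).symm
    · exact hqr (congrArg Prod.fst h).symm
  have hsub : A ∪ B ∪ C ⊆ Finset.univ.filter fun x : Fin 3 × Fin n => f x.1 x.2 = v := by
    intro x hx
    simp only [hA, hB, hC, Finset.mem_union, Finset.mem_image] at hx
    rw [Finset.mem_filter]
    refine ⟨Finset.mem_univ _, ?_⟩
    rcases hx with (⟨c, hc, rfl⟩ | ⟨c, hc, rfl⟩) | ⟨c, hc, rfl⟩
    · exact hp c hc
    · exact hq c hc
    · exact hr c hc
  have hcard : (A ∪ B ∪ C).card = Sp.card + Sq.card + Sr.card := by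
    rw [Finset.card_union_of_disjoint hABC, Finset.card_union_of_disjoint hAB,
      Finset.card_image_of_injective _ (hinj p), Finset.card_image_of_injective _ (hinj q),
      Finset.card_image_of_injective _ (hinj r)]
  calc Sp.card + Sq.card + Sr.card = (A ∪ B ∪ C).card := hcard.symm
    _ ≤ _ := Finset.card_le_card hsub

lemma card_erase_ge {n : ℕ} (a : Fin n) : n - 1 ≤ (Finset.univ.erase a : Finset (Fin n)).card := by
  rcases Nat.eq_zero_or_pos n with rfl | hn
  · exact absurd a.2 (by omega)
  · rw [Finset.card_erase_of_mem (Finset.mem_univ _), Finset.card_univ, Fintype.card_fin]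

lemma card_sdiff2_ge {n : ℕ} (a b : Fin n) :
    n - 2 ≤ (Finset.univ \ {a, b} : Finset (Fin n)).card := by
  have h1 : ({a, b} : Finset (Fin n)).card ≤ 2 := by
    have := Finset.card_insert_le a ({b} : Finset (Fin n)); simp at *; omega
  rw [Finset.card_sdiff_of_subset (Finset.subset_univ _), Finset.card_univ, Fintype.card_fin]
  omega

lemma card_univ_fin {n : ℕ} : (Finset.univ : Finset (Fin n)).card = n := by
  rw [Finset.card_univ, Fintype.card_fin]

/-- Version A: the `h`-side has no exceptions besides `a`. -/
lemma pair_const {n : ℕ} (hn : 4 ≤ n) (g h : Fin n → ℕ) (s : ℕ) (a b : Fin n)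
    (piv : ∀ x y : Fin n, x ≠ a → y ≠ a → x ≠ y → g x = s ∨ h y = s ∨ g x = h y)
    (hg : ∀ x, x ≠ a → x ≠ b → g x ≠ s)
    (hh : ∀ y, y ≠ a → h y ≠ s) :
    ∃ v, (∀ x, x ≠ a → x ≠ b → g x = v) ∧ (∀ y, y ≠ a → h y = v) := by
  have Hxy : ∀ x y, x ≠ a → x ≠ b → y ≠ a → x ≠ y → g x = h y := by
    intro x y hxa hxb hya hxy
    rcases piv x y hxa hya hxy with h' | h' | h'
    · exact absurd h' (hg x hxa hxb)
    · exact absurd h' (hh y hya)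
    · exact h'
  obtain ⟨x1, x2, hx12, hx1a, hx1b, hx2a, hx2b⟩ := exists_two_ne hn a b
  obtain ⟨y0, hy0a, hy01, hy02⟩ := exists_ne3 hn a x1 x2
  have e1 : g x1 = h y0 := Hxy _ _ hx1a hx1b hy0a (Ne.symm hy01)
  have e2 : g x2 = h y0 := Hxy _ _ hx2a hx2b hy0a (Ne.symm hy02)
  have hv : ∀ y, y ≠ a → h y = h y0 := by
    intro y hya
    by_cases hy1 : y = x1
    · have hx2y : x2 ≠ y := by rw [hy1]; exact Ne.symm hx12
      rw [← Hxy x2 y hx2a hx2b hya hx2y, e2]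
    · rw [← Hxy x1 y hx1a hx1b hya (fun h' => hy1 h'.symm), e1]
  refine ⟨h y0, ?_, hv⟩
  intro x hxa hxb
  obtain ⟨y, hya, hyx, _⟩ := exists_ne3 hn a x x
  rw [Hxy x y hxa hxb hya (Ne.symm hyx), hv y hya]

/-- Version B: both sides have one extra exception, but `c0` is a valid `g`-column
avoided by all `h`-columns. -/
lemma pair_constB {n : ℕ} (hn : 4 ≤ n) (g h : Fin n → ℕ) (s : ℕ) (a b c0 : Fin n)
    (piv : ∀ x y : Fin n, x ≠ a → y ≠ a → x ≠ y → g x = s ∨ h y = s ∨ g x = h y)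
    (hg : ∀ x, x ≠ a → x ≠ b → g x ≠ s)
    (hh : ∀ y, y ≠ a → y ≠ c0 → h y ≠ s)
    (hc0a : c0 ≠ a) (hc0b : c0 ≠ b) :
    ∃ v, (∀ x, x ≠ a → x ≠ b → g x = v) ∧ (∀ y, y ≠ a → y ≠ c0 → h y = v) := by
  have Hxy : ∀ x y, x ≠ a → x ≠ b → y ≠ a → y ≠ c0 → x ≠ y → g x = h y := by
    intro x y hxa hxb hya hyc hxy
    rcases piv x y hxa hya hxy with h' | h' | h'
    · exact absurd h' (hg x hxa hxb)
    · exact absurd h' (hh y hya hyc)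
    · exact h'
  have hv : ∀ y, y ≠ a → y ≠ c0 → h y = g c0 := by
    intro y hya hyc
    exact (Hxy c0 y hc0a hc0b hya hyc (fun h' => hyc h'.symm)).symm
  refine ⟨g c0, ?_, hv⟩
  intro x hxa hxb
  obtain ⟨y, hya, hyc, hyx⟩ := exists_ne3 hn a c0 x
  rw [Hxy x y hxa hxb hya hyc (Ne.symm hyx), hv y hya hyc]


section Cases

variable {n : ℕ} {f : Fin 3 → Fin n → ℕ} {s : ℕ}

/-- Case: one row has two `s`-cells (`a1`, `a2`), another has one (`b`), third is clean. -/
lemma two_one (hn : 4 ≤ n)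
    (K : ∀ p q r : Fin 3, p ≠ q → p ≠ r → q ≠ r → ∀ cp cq cr : Fin n,
      cp ≠ cq → cp ≠ cr → cq ≠ cr →
      f p cp = f q cq ∨ f p cp = f r cr ∨ f q cq = f r cr)
    (P Q R : Fin 3) (hPQ : P ≠ Q) (hPR : P ≠ R) (hQR : Q ≠ R)
    (a1 a2 b : Fin n) (h12 : a1 ≠ a2)
    (ha1 : f P a1 = s) (ha2 : f P a2 = s) (hb : f Q b = s)
    (hall : ∀ x : Fin 3 × Fin n, f x.1 x.2 = s → x = (P, a1) ∨ x = (P, a2) ∨ x = (Q, b)) :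
    ∃ v : ℕ, 2 * n - 2 ≤ (Finset.univ.filter fun x : Fin 3 × Fin n => f x.1 x.2 = v).card := by
  have hQs : ∀ c, c ≠ b → f Q c ≠ s := by
    intro c hc hcs
    rcases hall (Q, c) hcs with h | h | h <;> rw [Prod.mk.injEq] at h
    · exact hPQ h.1.symm
    · exact hPQ h.1.symm
    · exact hc h.2
  have hRs : ∀ c, f R c ≠ s := by
    intro c hcs
    rcases hall (R, c) hcs with h | h | h <;> rw [Prod.mk.injEq] at h
    · exact hPR h.1.symm
    · exact hPR h.1.symm
    · exact hQR h.1.symm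
  by_cases hb12 : b = a1 ∨ b = a2
  · have hPb : f P b = s := by rcases hb12 with h | h <;> rw [h] <;> assumption
    have piv := pivotK K P Q R hPQ hPR hQR b hPb
    obtain ⟨v, hgv, hhv⟩ := pair_const hn (f Q) (f R) s b b piv
      (fun x hxa _ => hQs x hxa) (fun y _ => hRs y)
    refine ⟨v, ?_⟩
    have h3 := three_rows f v P Q R hPQ hPR hQR ∅ (Finset.univ.erase b) (Finset.univ.erase b)
      (by simp)
      (fun c hc => hgv c (Finset.ne_of_mem_erase hc) (Finset.ne_of_mem_erase hc))
      (fun c hc => hhv c (Finset.ne_of_mem_erase hc))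
    have hce := card_erase_ge (n := n) b
    have he : (∅ : Finset (Fin n)).card = 0 := Finset.card_empty
    omega
  · push_neg at hb12
    obtain ⟨hba1, hba2⟩ := hb12
    have piv1 := pivotK K P Q R hPQ hPR hQR a1 ha1
    obtain ⟨v1, hq1, hr1⟩ := pair_const hn (f Q) (f R) s a1 b piv1
      (fun x _ hxb => hQs x hxb) (fun y _ => hRs y)
    have piv2 := pivotK K P Q R hPQ hPR hQR a2 ha2
    obtain ⟨v2, hq2, hr2⟩ := pair_const hn (f Q) (f R) s a2 b piv2
      (fun x _ hxb => hQs x hxb) (fun y _ => hRs y)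
    obtain ⟨d, hd1, hd2, _⟩ := exists_ne3 hn a1 a2 a2
    have hvv : v1 = v2 := by rw [← hr1 d hd1, hr2 d hd2]
    refine ⟨v1, ?_⟩
    have hQv : ∀ c ∈ Finset.univ.erase b, f Q c = v1 := by
      intro c hc
      have hcb := Finset.ne_of_mem_erase hc
      by_cases hca : c = a1
      · subst hca
        rw [hq2 c h12 hcb, hvv]
      · exact hq1 c hca hcb
    have hRv : ∀ c ∈ (Finset.univ : Finset (Fin n)), f R c = v1 := by
      intro c _
      by_cases hca : c = a1
      · subst hca
        rw [hr2 c h12, hvv]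
      · exact hr1 c hca
    have h3 := three_rows f v1 P Q R hPQ hPR hQR ∅ (Finset.univ.erase b) Finset.univ
      (by simp) hQv hRv
    have hce := card_erase_ge (n := n) b
    have hcu := card_univ_fin (n := n)
    have he : (∅ : Finset (Fin n)).card = 0 := Finset.card_empty
    omega

/-- Case: two `s`-cells share a column `a` (rows `u`, `v`), third cell `(w, b)`. -/
lemma shared_col (hn : 4 ≤ n)
    (K : ∀ p q r : Fin 3, p ≠ q → p ≠ r → q ≠ r → ∀ cp cq cr : Fin n,
      cp ≠ cq → cp ≠ cr → cq ≠ cr →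
      f p cp = f q cq ∨ f p cp = f r cr ∨ f q cq = f r cr)
    (u v w : Fin 3) (huv : u ≠ v) (huw : u ≠ w) (hvw : v ≠ w)
    (a b : Fin n)
    (hua : f u a = s) (hva : f v a = s) (hwb : f w b = s)
    (hall : ∀ x : Fin 3 × Fin n, f x.1 x.2 = s → x = (u, a) ∨ x = (v, a) ∨ x = (w, b)) :
    ∃ v : ℕ, 2 * n - 2 ≤ (Finset.univ.filter fun x : Fin 3 × Fin n => f x.1 x.2 = v).card := by
  have hus : ∀ c, c ≠ a → f u c ≠ s := by
    intro c hc hcs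
    rcases hall (u, c) hcs with h | h | h <;> rw [Prod.mk.injEq] at h
    · exact hc h.2
    · exact huv h.1
    · exact huw h.1
  have hvs : ∀ c, c ≠ a → f v c ≠ s := by
    intro c hc hcs
    rcases hall (v, c) hcs with h | h | h <;> rw [Prod.mk.injEq] at h
    · exact huv h.1.symm
    · exact hc h.2
    · exact hvw h.1
  have hws : ∀ c, c ≠ b → f w c ≠ s := by
    intro c hc hcs
    rcases hall (w, c) hcs with h | h | h <;> rw [Prod.mk.injEq] at h
    · exact huw h.1.symm
    · exact hvw h.1.symm
    · exact hc h.2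
  have piv1 := pivotK K u w v huw huv (Ne.symm hvw) a hua
  obtain ⟨v1, hw1, hv1⟩ := pair_const hn (f w) (f v) s a b piv1
    (fun x _ hxb => hws x hxb) (fun y hya => hvs y hya)
  have piv2 := pivotK K v w u hvw (Ne.symm huv) (Ne.symm huw) a hva
  obtain ⟨v2, hw2, hu2⟩ := pair_const hn (f w) (f u) s a b piv2
    (fun x _ hxb => hws x hxb) (fun y hya => hus y hya)
  obtain ⟨d, hd1, hd2, _⟩ := exists_ne3 hn a b b
  have hvv : v1 = v2 := by rw [← hw1 d hd1 hd2, hw2 d hd1 hd2]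
  refine ⟨v1, ?_⟩
  have hSu : ∀ c ∈ Finset.univ.erase a, f u c = v1 := by
    intro c hc
    rw [hu2 c (Finset.ne_of_mem_erase hc), hvv]
  have hSv : ∀ c ∈ Finset.univ.erase a, f v c = v1 := fun c hc =>
    hv1 c (Finset.ne_of_mem_erase hc)
  have hSw : ∀ c ∈ (Finset.univ \ {a, b} : Finset (Fin n)), f w c = v1 := by
    intro c hc
    rw [Finset.mem_sdiff] at hc
    simp only [Finset.mem_insert, Finset.mem_singleton, not_or] at hc
    exact hw1 c hc.2.1 hc.2.2
  have h3 := three_rows f v1 u v w huv huw hvw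
    (Finset.univ.erase a) (Finset.univ.erase a) (Finset.univ \ {a, b}) hSu hSv hSw
  have hce := card_erase_ge (n := n) a
  have hcs2 := card_sdiff2_ge (n := n) a b
  omega

/-- Case: three `s`-cells, one per row, all in distinct columns. -/
lemma tri (hn : 4 ≤ n)
    (K : ∀ p q r : Fin 3, p ≠ q → p ≠ r → q ≠ r → ∀ cp cq cr : Fin n,
      cp ≠ cq → cp ≠ cr → cq ≠ cr →
      f p cp = f q cq ∨ f p cp = f r cr ∨ f q cq = f r cr)
    (p q r : Fin 3) (hpq : p ≠ q) (hpr : p ≠ r) (hqr : q ≠ r)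
    (a b c : Fin n) (hab : a ≠ b) (hca : c ≠ a) (hcb : c ≠ b)
    (ha : f p a = s) (hb : f q b = s) (hc : f r c = s)
    (hall : ∀ x : Fin 3 × Fin n, f x.1 x.2 = s → x = (p, a) ∨ x = (q, b) ∨ x = (r, c)) :
    ∃ v : ℕ, 2 * n - 2 ≤ (Finset.univ.filter fun x : Fin 3 × Fin n => f x.1 x.2 = v).card := by
  have hps : ∀ x, x ≠ a → f p x ≠ s := by
    intro x hx hxs
    rcases hall (p, x) hxs with h | h | h <;> rw [Prod.mk.injEq] at h
    · exact hx h.2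
    · exact hpq h.1
    · exact hpr h.1
  have hqs : ∀ x, x ≠ b → f q x ≠ s := by
    intro x hx hxs
    rcases hall (q, x) hxs with h | h | h <;> rw [Prod.mk.injEq] at h
    · exact hpq h.1.symm
    · exact hx h.2
    · exact hqr h.1
  have hrs : ∀ x, x ≠ c → f r x ≠ s := by
    intro x hx hxs
    rcases hall (r, x) hxs with h | h | h <;> rw [Prod.mk.injEq] at h
    · exact hpr h.1.symm
    · exact hqr h.1.symm
    · exact hx h.2
  have piv1 := pivotK K p q r hpq hpr hqr a ha
  obtain ⟨v1, hq1, hr1⟩ := pair_constB hn (f q) (f r) s a b c piv1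
    (fun x _ hxb => hqs x hxb) (fun y _ hyc => hrs y hyc) hca hcb
  have piv2 := pivotK K q p r hpq.symm hqr hpr b hb
  obtain ⟨v2, hp2, hr2⟩ := pair_constB hn (f p) (f r) s b a c piv2
    (fun x _ hxa => hps x hxa) (fun y _ hyc => hrs y hyc) hcb hca
  have piv3 := pivotK K r p q hpr.symm hqr.symm hpq c hc
  obtain ⟨v3, hp3, hq3⟩ := pair_constB hn (f p) (f q) s c a b piv3
    (fun x _ hxa => hps x hxa) (fun y _ hyb => hqs y hyb)
    (Ne.symm hcb) (Ne.symm hab)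
  obtain ⟨d, hda, hdb, hdc⟩ := exists_ne3 hn a b c
  have hv12 : v1 = v2 := by rw [← hr1 d hda hdc, hr2 d hdb hdc]
  have hv13 : v1 = v3 := by rw [← hq1 d hda hdb, hq3 d hdc hdb]
  refine ⟨v1, ?_⟩
  have hSp : ∀ x ∈ Finset.univ.erase a, f p x = v1 := by
    intro x hx
    have hxa := Finset.ne_of_mem_erase hx
    by_cases hxb : x = b
    · subst hxb
      rw [hp3 x (Ne.symm hcb) hxa, hv13]
    · rw [hp2 x hxb hxa, hv12]
  have hSq : ∀ x ∈ Finset.univ.erase b, f q x = v1 := by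
    intro x hx
    have hxb := Finset.ne_of_mem_erase hx
    by_cases hxa : x = a
    · subst hxa
      rw [hq3 x (Ne.symm hca) hxb, hv13]
    · exact hq1 x hxa hxb
  have hSr : ∀ x ∈ Finset.univ.erase c, f r x = v1 := by
    intro x hx
    have hxc := Finset.ne_of_mem_erase hx
    by_cases hxa : x = a
    · subst hxa
      rw [hr2 x hab hxc, hv12]
    · exact hr1 x hxa hxc
  have h3 := three_rows f v1 p q r hpq hpr hqr
    (Finset.univ.erase a) (Finset.univ.erase b) (Finset.univ.erase c) hSp hSq hSr
  have hc1 := card_erase_ge (n := n) a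
  have hc2 := card_erase_ge (n := n) b
  have hc3 := card_erase_ge (n := n) c
  omega

/-- Main case: two `s`-cells `(p,a)`, `(q,b)` in different rows and columns. -/
lemma main2 (hn : 4 ≤ n)
    (K : ∀ p q r : Fin 3, p ≠ q → p ≠ r → q ≠ r → ∀ cp cq cr : Fin n,
      cp ≠ cq → cp ≠ cr → cq ≠ cr →
      f p cp = f q cq ∨ f p cp = f r cr ∨ f q cq = f r cr)
    (hs3 : (Finset.univ.filter fun x : Fin 3 × Fin n => f x.1 x.2 = s).card ≤ 3)
    (p q r : Fin 3) (hpq : p ≠ q) (hpr : p ≠ r) (hqr : q ≠ r)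
    (a b : Fin n) (ha : f p a = s) (hb : f q b = s) (hab : a ≠ b) :
    ∃ v : ℕ, 2 * n - 2 ≤ (Finset.univ.filter fun x : Fin 3 × Fin n => f x.1 x.2 = v).card := by
  by_cases h2 : ∃ x : Fin 3 × Fin n, f x.1 x.2 = s ∧ x ≠ (p, a) ∧ x ≠ (q, b)
  · obtain ⟨⟨i, c⟩, hic, hne1, hne2⟩ := h2
    have hmem1 : (p, a) ∈ Finset.univ.filter fun x : Fin 3 × Fin n => f x.1 x.2 = s :=
      Finset.mem_filter.mpr ⟨Finset.mem_univ _, ha⟩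
    have hmem2 : (q, b) ∈ Finset.univ.filter fun x : Fin 3 × Fin n => f x.1 x.2 = s :=
      Finset.mem_filter.mpr ⟨Finset.mem_univ _, hb⟩
    have hmem3 : (i, c) ∈ Finset.univ.filter fun x : Fin 3 × Fin n => f x.1 x.2 = s :=
      Finset.mem_filter.mpr ⟨Finset.mem_univ _, hic⟩
    have hd1 : (p, a) ≠ (q, b) := fun h => hpq (congrArg Prod.fst h)
    have hall0 := mem3 hs3 hmem1 hmem2 hmem3 hd1 (Ne.symm hne1) (Ne.symm hne2)
    have hall : ∀ x : Fin 3 × Fin n, f x.1 x.2 = s →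
        x = (p, a) ∨ x = (q, b) ∨ x = (i, c) :=
      fun x hx => hall0 x (Finset.mem_filter.mpr ⟨Finset.mem_univ _, hx⟩)
    rcases fin3_cover p q r i hpq hpr hqr with rfl | rfl | rfl
    · -- third cell in row p
      have hca : c ≠ a := fun h => hne1 (by rw [h])
      refine two_one hn K p q r hpq hpr hqr a c b (Ne.symm hca) ha hic hb ?_
      intro x hx
      rcases hall x hx with h | h | h <;> tauto
    · -- third cell in row q
      have hcb : c ≠ b := fun h => hne2 (by rw [h])
      refine two_one hn K q p r hpq.symm hqr hpr b c a (Ne.symm hcb) hb hic ha ?_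
      intro x hx
      rcases hall x hx with h | h | h <;> tauto
    · -- third cell in row r
      by_cases hca : c = a
      · have hra : f r a = s := hca ▸ hic
        refine shared_col hn K p r q hpr hpq (Ne.symm hqr) a b ha hra hb ?_
        intro x hx
        rcases hall x hx with h | h | h
        · tauto
        · tauto
        · rw [hca] at h; tauto
      · by_cases hcb : c = b
        · have hrb : f r b = s := hcb ▸ hic
          refine shared_col hn K q r p hqr hpq.symm hpr.symm b a hb hrb ha ?_
          intro x hx
          rcases hall x hx with h | h | h
          · tauto
          · tauto
          · rw [hcb] at h; tauto
        · exact tri hn K p q r hpq hpr hqr a b c hab hca hcb ha hb hic hall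
  · push_neg at h2
    have hps : ∀ x, x ≠ a → f p x ≠ s := by
      intro x hx hxs
      have h := h2 (p, x) hxs (fun h => hx (congrArg Prod.snd h))
      exact hpq (congrArg Prod.fst h)
    have hqs : ∀ x, x ≠ b → f q x ≠ s := by
      intro x hx hxs
      rcases eq_or_ne (q, x) (p, a) with h | h
      · exact hpq (congrArg Prod.fst h).symm
      · exact hx (congrArg Prod.snd (h2 (q, x) hxs h))
    have hrs : ∀ x, f r x ≠ s := by
      intro x hxs
      rcases eq_or_ne (r, x) (p, a) with h | h
      · exact hpr (congrArg Prod.fst h).symm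
      · exact hqr (congrArg Prod.fst (h2 (r, x) hxs h)).symm
    have piv1 := pivotK K p q r hpq hpr hqr a ha
    obtain ⟨v1, hq1, hr1⟩ := pair_const hn (f q) (f r) s a b piv1
      (fun x _ hxb => hqs x hxb) (fun y _ => hrs y)
    have piv2 := pivotK K q p r hpq.symm hqr hpr b hb
    obtain ⟨v2, hp2, hr2⟩ := pair_const hn (f p) (f r) s b a piv2
      (fun x _ hxa => hps x hxa) (fun y _ => hrs y)
    obtain ⟨d, hda, hdb, _⟩ := exists_ne3 hn a b b
    have hvv : v1 = v2 := by rw [← hr1 d hda, hr2 d hdb]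
    refine ⟨v1, ?_⟩
    have hSp : ∀ x ∈ (Finset.univ \ {a, b} : Finset (Fin n)), f p x = v1 := by
      intro x hx
      rw [Finset.mem_sdiff] at hx
      simp only [Finset.mem_insert, Finset.mem_singleton, not_or] at hx
      rw [hp2 x hx.2.2 hx.2.1, hvv]
    have hSq : ∀ x ∈ (Finset.univ \ {a, b} : Finset (Fin n)), f q x = v1 := by
      intro x hx
      rw [Finset.mem_sdiff] at hx
      simp only [Finset.mem_insert, Finset.mem_singleton, not_or] at hx
      exact hq1 x hx.2.1 hx.2.2
    have hSr : ∀ x ∈ (Finset.univ : Finset (Fin n)), f r x = v1 := by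
      intro x _
      by_cases hxa : x = a
      · subst hxa
        rw [hr2 x hab, hvv]
      · exact hr1 x hxa
    have h3 := three_rows f v1 p q r hpq hpr hqr
      (Finset.univ \ {a, b}) (Finset.univ \ {a, b}) Finset.univ hSp hSq hSr
    have hc1 := card_sdiff2_ge (n := n) a b
    have hcu := card_univ_fin (n := n)
    omega

end Cases

theorem stmt_7 (n : ℕ) (hn : 4 ≤ n) (f : Fin 3 → Fin n → ℕ)
    (hno : ¬ ∃ σ : Fin 3 → Fin n, Function.Injective σ ∧
        Function.Injective (fun i => f i (σ i)))
    (hs : ∃ s : ℕ,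
        1 ≤ (Finset.univ.filter (fun p : Fin 3 × Fin n => f p.1 p.2 = s)).card ∧
        (Finset.univ.filter (fun p : Fin 3 × Fin n => f p.1 p.2 = s)).card ≤ 3) :
    ∃ s : ℕ, 2 * n - 2 ≤ (Finset.univ.filter (fun p : Fin 3 × Fin n => f p.1 p.2 = s)).card := by
  obtain ⟨s, hs1, hs3⟩ := hs
  have K := key_s7 hno
  have hpos : 0 < (Finset.univ.filter (fun x : Fin 3 × Fin n => f x.1 x.2 = s)).card := by
    omega
  obtain ⟨⟨p, a⟩, hpa⟩ := Finset.card_pos.mp hpos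
  have ha : f p a = s := (Finset.mem_filter.mp hpa).2
  obtain ⟨q, r, hpq, hpr, hqr⟩ := other_rows p
  by_cases h1 : ∃ c : Fin n, c ≠ a ∧ (f q c = s ∨ f r c = s)
  · obtain ⟨b, hba, hbs | hbs⟩ := h1
    · exact main2 hn K hs3 p q r hpq hpr hqr a b ha hbs (Ne.symm hba)
    · exact main2 hn K hs3 p r q hpr hpq (Ne.symm hqr) a b ha hbs (Ne.symm hba)
  · push_neg at h1
    have piv := pivotK K p q r hpq hpr hqr a ha
    obtain ⟨v, hqv, hrv⟩ := pair_const hn (f q) (f r) s a a piv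
      (fun x hxa _ => (h1 x hxa).1) (fun y hya => (h1 y hya).2)
    refine ⟨v, ?_⟩
    have h3 := three_rows f v p q r hpq hpr hqr ∅ (Finset.univ.erase a)
      (Finset.univ.erase a) (by simp)
      (fun c hc => hqv c (Finset.ne_of_mem_erase hc) (Finset.ne_of_mem_erase hc))
      (fun c hc => hrv c (Finset.ne_of_mem_erase hc))
    have hce := card_erase_ge (n := n) a
    have he : (∅ : Finset (Fin n)).card = 0 := Finset.card_empty
    omega
end

section
/- Let n ≥ 5 be an integer. Then every 3-by-n array in which each symbol appears at most ⌊(3n - 1)/2⌋ times has a latin transversal. (Equivalently, L(3,n) ≥ ⌊(3n - 1)/2⌋ for n ≥ 5.) -/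
open Finset

namespace LT3

variable {n : ℕ}

/-- number of occurrences of symbol `s` in row `i` -/
def Nc (f : Fin 3 → Fin n → ℕ) (i : Fin 3) (s : ℕ) : ℕ :=
  (univ.filter (fun a => f i a = s)).card

/-- number of cells in row `i` with symbol different from `m` -/
def Sc (f : Fin 3 → Fin n → ℕ) (i : Fin 3) (m : ℕ) : ℕ :=
  (univ.filter (fun a => f i a ≠ m)).card

lemma cover (i j l r : Fin 3) (hij : i ≠ j) (hil : i ≠ l) (hjl : j ≠ l) :
    r = i ∨ r = j ∨ r = l := by revert i j l r; decide

lemma perm6 (i j l : Fin 3) (hij : i ≠ j) (hil : i ≠ l) (hjl : j ≠ l) :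
    (i=0∧j=1∧l=2)∨(i=0∧j=2∧l=1)∨(i=1∧j=0∧l=2)∨(i=1∧j=2∧l=0)∨(i=2∧j=0∧l=1)∨(i=2∧j=1∧l=0) := by
  revert i j l; decide

lemma cnt_perm (f : Fin 3 → Fin n → ℕ) (i j l : Fin 3) (hij : i ≠ j) (hil : i ≠ l)
    (hjl : j ≠ l) (s : ℕ) :
    Nc f i s + Nc f j s + Nc f l s = Nc f 0 s + Nc f 1 s + Nc f 2 s := by
  rcases perm6 i j l hij hil hjl with ⟨rfl,rfl,rfl⟩|⟨rfl,rfl,rfl⟩|⟨rfl,rfl,rfl⟩|⟨rfl,rfl,rfl⟩|⟨rfl,rfl,rfl⟩|⟨rfl,rfl,rfl⟩ <;> omega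

lemma Sc_perm (f : Fin 3 → Fin n → ℕ) (i j l : Fin 3) (hij : i ≠ j) (hil : i ≠ l)
    (hjl : j ≠ l) (m : ℕ) :
    Sc f i m + Sc f j m + Sc f l m = Sc f 0 m + Sc f 1 m + Sc f 2 m := by
  rcases perm6 i j l hij hil hjl with ⟨rfl,rfl,rfl⟩|⟨rfl,rfl,rfl⟩|⟨rfl,rfl,rfl⟩|⟨rfl,rfl,rfl⟩|⟨rfl,rfl,rfl⟩|⟨rfl,rfl,rfl⟩ <;> omega

lemma Nc_le (f : Fin 3 → Fin n → ℕ) (i : Fin 3) (s : ℕ) : Nc f i s ≤ n := by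
  have := Finset.card_filter_le (univ : Finset (Fin n)) (fun a => f i a = s)
  simpa [Nc] using this

lemma one_le_Nc (f : Fin 3 → Fin n → ℕ) {i : Fin 3} {s : ℕ} (a : Fin n) (h : f i a = s) :
    1 ≤ Nc f i s := by
  apply Finset.card_pos.2
  exact ⟨a, by simp [h]⟩

lemma two_le_Nc (f : Fin 3 → Fin n → ℕ) {i : Fin 3} {s : ℕ} (a b : Fin n) (hab : a ≠ b)
    (ha : f i a = s) (hb : f i b = s) : 2 ≤ Nc f i s := by
  apply Finset.one_lt_card.2
  exact ⟨a, by simp [ha], b, by simp [hb], hab⟩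

lemma exists_of_Nc (f : Fin 3 → Fin n → ℕ) {i : Fin 3} {s : ℕ} (h : 1 ≤ Nc f i s) :
    ∃ a, f i a = s := by
  obtain ⟨a, ha⟩ := Finset.card_pos.1 h
  exact ⟨a, by simpa using ha⟩

lemma exists_two_of_Nc (f : Fin 3 → Fin n → ℕ) {i : Fin 3} {s : ℕ} (h : 2 ≤ Nc f i s) :
    ∃ a b, a ≠ b ∧ f i a = s ∧ f i b = s := by
  obtain ⟨a, ha, b, hb, hab⟩ := Finset.one_lt_card.1 h
  exact ⟨a, b, hab, by simpa using ha, by simpa using hb⟩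

lemma Nc_le_two (f : Fin 3 → Fin n → ℕ) {i : Fin 3} {s : ℕ} (x c : Fin n)
    (h : ∀ a, f i a = s ↔ a = x ∨ a = c) : Nc f i s ≤ 2 := by
  have hsub : univ.filter (fun a => f i a = s) ⊆ {x, c} := by
    intro a ha
    simp only [mem_filter] at ha
    rcases (h a).1 ha.2 with rfl|rfl <;> simp
  calc Nc f i s ≤ ({x, c} : Finset (Fin n)).card := Finset.card_le_card hsub
    _ ≤ 2 := by
        apply le_trans (Finset.card_insert_le _ _); simp

lemma row_all_card (f : Fin 3 → Fin n → ℕ) {i : Fin 3} {u v : ℕ} (huv : u ≠ v)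
    (hall : ∀ a, f i a = u ∨ f i a = v) : Nc f i u + Nc f i v = n := by
  have hd : Disjoint (univ.filter (fun a => f i a = u)) (univ.filter (fun a => f i a = v)) := by
    rw [Finset.disjoint_left]
    intro a ha hb
    simp only [mem_filter] at ha hb
    exact huv (ha.2.symm.trans hb.2)
  have hu : (univ.filter (fun a => f i a = u)) ∪ (univ.filter (fun a => f i a = v)) = univ := by
    apply Finset.eq_univ_iff_forall.2
    intro a
    rcases hall a with h|h <;> simp [h]
  have := Finset.card_union_of_disjoint hd
  rw [hu] at this
  simp only [card_univ, Fintype.card_fin] at this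
  simp only [Nc]
  omega

lemma Sc_add_Nc (f : Fin 3 → Fin n → ℕ) (i : Fin 3) (m : ℕ) : Sc f i m + Nc f i m = n := by
  have := Finset.card_filter_add_card_filter_not (s := (univ : Finset (Fin n)))
    (p := fun a => f i a = m)
  simp only [card_univ, Fintype.card_fin] at this
  simp only [Sc, Nc, Ne]
  omega

lemma avoid (hn : 5 ≤ n) (T : Finset (Fin n)) (h : T.card < n) : ∃ z, z ∉ T := by
  by_contra hc
  push_neg at hc
  have : (univ : Finset (Fin n)) ⊆ T := fun a _ => hc a
  have := Finset.card_le_card this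
  simp only [card_univ, Fintype.card_fin] at this
  omega

lemma avoid2 (hn : 5 ≤ n) (x y : Fin n) : ∃ z, z ≠ x ∧ z ≠ y := by
  have hT : ({x, y} : Finset (Fin n)).card ≤ 2 := by
    apply le_trans (Finset.card_insert_le _ _); simp
  obtain ⟨z, hz⟩ := avoid hn {x, y} (by omega)
  refine ⟨z, ?_, ?_⟩ <;> intro h <;> subst h <;> simp at hz

lemma avoid3 (hn : 5 ≤ n) (x y w : Fin n) : ∃ z, z ≠ x ∧ z ≠ y ∧ z ≠ w := by
  have hT : ({x, y, w} : Finset (Fin n)).card ≤ 3 := by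
    apply le_trans (Finset.card_insert_le _ _)
    apply Nat.succ_le_succ
    apply le_trans (Finset.card_insert_le _ _); simp
  obtain ⟨z, hz⟩ := avoid hn {x, y, w} (by omega)
  refine ⟨z, ?_, ?_, ?_⟩ <;> intro h <;> subst h <;> simp at hz


section Main

variable (f : Fin 3 → Fin n → ℕ)
variable (hW : ∀ i j l : Fin 3, i ≠ j → i ≠ l → j ≠ l → ∀ a b c : Fin n,
    a ≠ b → a ≠ c → b ≠ c → f i a = f j b ∨ f i a = f l c ∨ f j b = f l c)
variable (hC : ∀ s : ℕ, 2 * (Nc f 0 s + Nc f 1 s + Nc f 2 s) ≤ 3 * n - 1)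
variable (hn : 5 ≤ n)

include hC hn in
/-- for any two distinct rows there are cells in distinct columns with distinct symbols -/
lemma split (j l i : Fin 3) (hij : i ≠ j) (hil : i ≠ l) (hjl : j ≠ l) :
    ∃ b c : Fin n, b ≠ c ∧ f j b ≠ f l c := by
  by_contra hsp
  push_neg at hsp
  have c0 : Fin n := ⟨0, by omega⟩
  set s := f l c0 with hs
  have hl : ∀ c, f l c = s := by
    intro c
    obtain ⟨b', hb'c, hb'c0⟩ := avoid2 hn c c0
    rw [← hsp b' c hb'c, hsp b' c0 hb'c0]
  have hj : ∀ b, f j b = s := by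
    intro b
    obtain ⟨c', hc'b, -⟩ := avoid2 hn b b
    rw [hsp b c' (Ne.symm hc'b), hl c']
  have hNj : Nc f j s = n := by
    have : univ.filter (fun a => f j a = s) = univ := Finset.eq_univ_iff_forall.2 (by simp [hj])
    simp [Nc, this]
  have hNl : Nc f l s = n := by
    have : univ.filter (fun a => f l a = s) = univ := Finset.eq_univ_iff_forall.2 (by simp [hl])
    simp [Nc, this]
  have hcp := cnt_perm f j l i hjl (Ne.symm hij) (Ne.symm hil) s
  have := hC s
  omega

include hW hC hn in
/-- an array with a constant row has a transversal (under the count bound) -/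
lemma const_case (i j l : Fin 3) (hij : i ≠ j) (hil : i ≠ l) (hjl : j ≠ l)
    (hl : ∀ a b : Fin n, f l a = f l b) : False := by
  have c0 : Fin n := ⟨0, by omega⟩
  set u := f l c0 with hu
  have hlc : ∀ c, f l c = u := fun c => hl c c0
  set Vi := univ.filter (fun a => f i a ≠ u) with hVi
  set Vj := univ.filter (fun a => f j a ≠ u) with hVj
  have hViu : Nc f i u + Vi.card = n := by
    have := Finset.card_filter_add_card_filter_not (s := (univ : Finset (Fin n)))
      (p := fun a => f i a = u)
    simp only [card_univ, Fintype.card_fin] at this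
    simp only [Nc, hVi, Ne]
    omega
  have hVju : Nc f j u + Vj.card = n := by
    have := Finset.card_filter_add_card_filter_not (s := (univ : Finset (Fin n)))
      (p := fun a => f j a = u)
    simp only [card_univ, Fintype.card_fin] at this
    simp only [Nc, hVj, Ne]
    omega
  have hNl : Nc f l u = n := by
    have : univ.filter (fun a => f l a = u) = univ := Finset.eq_univ_iff_forall.2 (by simp [hlc])
    simp [Nc, this]
  have cross : ∀ a ∈ Vi, ∀ b ∈ Vj, a ≠ b → f i a = f j b := by
    intro a ha b hb hab
    simp only [hVi, hVj, mem_filter] at ha hb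
    by_contra hne
    obtain ⟨c, hca, hcb⟩ := avoid2 hn a b
    rcases hW i j l hij hil hjl a b c hab (Ne.symm hca) (Ne.symm hcb) with h|h|h
    · exact hne h
    · rw [hlc c] at h; exact ha.2 h
    · rw [hlc c] at h; exact hb.2 h
  have hcard : 2 * (Vi.card + Vj.card) ≥ 3 * n + 1 := by
    have hcp := cnt_perm f i j l hij hil hjl u
    have := hC u
    omega
  have hVin : Vi.card ≤ n := le_trans (Finset.card_filter_le _ _) (by simp)
  have hVjn : Vj.card ≤ n := le_trans (Finset.card_filter_le _ _) (by simp)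
  have hVi3 : 3 ≤ Vi.card := by omega
  have hVj3 : 3 ≤ Vj.card := by omega
  obtain ⟨a0, ha0⟩ : Vi.Nonempty := Finset.card_pos.1 (by omega)
  have hVit : ∀ a ∈ Vi, f i a = f i a0 := by
    intro a ha
    have h1 : 1 ≤ ((Vj.erase a0).erase a).card := by
      have e1 := Finset.pred_card_le_card_erase (s := Vj) (a := a0)
      have e2 := Finset.pred_card_le_card_erase (s := Vj.erase a0) (a := a)
      omega
    obtain ⟨b, hb⟩ := Finset.card_pos.1 h1
    have hbVj : b ∈ Vj := Finset.mem_of_mem_erase (Finset.mem_of_mem_erase hb)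
    have hba : b ≠ a := Finset.ne_of_mem_erase hb
    have hba0 : b ≠ a0 := Finset.ne_of_mem_erase (Finset.mem_of_mem_erase hb)
    rw [cross a ha b hbVj (Ne.symm hba), cross a0 ha0 b hbVj (Ne.symm hba0)]
  have hVjt : ∀ b ∈ Vj, f j b = f i a0 := by
    intro b hb
    have h1 : 1 ≤ (Vi.erase b).card := by
      have e1 := Finset.pred_card_le_card_erase (s := Vi) (a := b)
      omega
    obtain ⟨a, ha⟩ := Finset.card_pos.1 h1
    have haVi : a ∈ Vi := Finset.mem_of_mem_erase ha
    have hab : a ≠ b := Finset.ne_of_mem_erase ha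
    rw [← cross a haVi b hb hab]
    exact hVit a haVi
  set t := f i a0 with ht
  have hNit : Vi.card ≤ Nc f i t := by
    apply Finset.card_le_card
    intro a ha
    simp only [mem_filter, mem_univ, true_and]
    exact hVit a ha
  have hNjt : Vj.card ≤ Nc f j t := by
    apply Finset.card_le_card
    intro b hb
    simp only [mem_filter, mem_univ, true_and]
    exact hVjt b hb
  have hcp := cnt_perm f i j l hij hil hjl t
  have := hC t
  omega

include hW hC hn in
/-- an array with an injective row has a transversal -/
lemma inj_case (i j l : Fin 3) (hij : i ≠ j) (hil : i ≠ l) (hjl : j ≠ l)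
    (hinj : ∀ a b : Fin n, a ≠ b → f i a ≠ f i b) : False := by
  obtain ⟨b, c, hbc, hval⟩ := split f hC hn j l i hij hil hjl
  have hA : 3 ≤ ((univ.erase b).erase c).card := by
    have e1 := Finset.pred_card_le_card_erase (s := (univ : Finset (Fin n))) (a := b)
    have e2 := Finset.pred_card_le_card_erase (s := (univ : Finset (Fin n)).erase b) (a := c)
    simp only [card_univ, Fintype.card_fin] at e1
    omega
  obtain ⟨a1, ha1⟩ := Finset.card_pos.1 (by omega : 0 < ((univ.erase b).erase c).card)
  have h2 : 0 < (((univ.erase b).erase c).erase a1).card := by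
    have := Finset.pred_card_le_card_erase (s := (univ.erase b).erase c) (a := a1)
    omega
  obtain ⟨a2, ha2⟩ := Finset.card_pos.1 h2
  have h3 : 0 < ((((univ.erase b).erase c).erase a1).erase a2).card := by
    have e1 := Finset.pred_card_le_card_erase (s := (univ.erase b).erase c) (a := a1)
    have e2 := Finset.pred_card_le_card_erase (s := ((univ.erase b).erase c).erase a1) (a := a2)
    omega
  obtain ⟨a3, ha3⟩ := Finset.card_pos.1 h3
  have ha2' : a2 ∈ (univ.erase b).erase c := Finset.mem_of_mem_erase ha2
  have ha3' : a3 ∈ (univ.erase b).erase c :=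
    Finset.mem_of_mem_erase (Finset.mem_of_mem_erase ha3)
  have h12 : a1 ≠ a2 := (Finset.ne_of_mem_erase ha2).symm
  have h13 : a1 ≠ a3 := (Finset.ne_of_mem_erase (Finset.mem_of_mem_erase ha3)).symm
  have h23 : a2 ≠ a3 := (Finset.ne_of_mem_erase ha3).symm
  have hmem : ∀ x, x ∈ (univ.erase b).erase c → x ≠ b ∧ x ≠ c := by
    intro x hx
    exact ⟨Finset.ne_of_mem_erase (Finset.mem_of_mem_erase hx), Finset.ne_of_mem_erase hx⟩
  have key : ∃ t : Fin n, t ≠ b ∧ t ≠ c ∧ f i t ≠ f j b ∧ f i t ≠ f l c := by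
    by_contra hk
    push_neg at hk
    have g1 := hk a1 (hmem a1 ha1).1 (hmem a1 ha1).2
    have g2 := hk a2 (hmem a2 ha2').1 (hmem a2 ha2').2
    have g3 := hk a3 (hmem a3 ha3').1 (hmem a3 ha3').2
    by_cases e1 : f i a1 = f j b <;> by_cases e2 : f i a2 = f j b <;>
      by_cases e3 : f i a3 = f j b
    · exact hinj a1 a2 h12 (e1.trans e2.symm)
    · exact hinj a1 a2 h12 (e1.trans e2.symm)
    · exact hinj a1 a3 h13 (e1.trans e3.symm)
    · exact hinj a2 a3 h23 ((g2 e2).trans (g3 e3).symm)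
    · exact hinj a2 a3 h23 (e2.trans e3.symm)
    · exact hinj a1 a3 h13 ((g1 e1).trans (g3 e3).symm)
    · exact hinj a1 a2 h12 ((g1 e1).trans (g2 e2).symm)
    · exact hinj a1 a2 h12 ((g1 e1).trans (g2 e2).symm)
  obtain ⟨t, htb, htc, hv1, hv2⟩ := key
  rcases hW i j l hij hil hjl t b c htb htc hbc with h|h|h
  · exact hv1 h
  · exact hv2 h
  · exact hval h

include hW in
/-- geometric dichotomy: two plural symbols in two rows force the third row into two symbols,
    or a very special configuration -/
lemma Gdich (i j l : Fin 3) (hij : i ≠ j) (hil : i ≠ l) (hjl : j ≠ l) (u v : ℕ)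
    (huv : u ≠ v) (hu : 2 ≤ Nc f i u) (hv : 2 ≤ Nc f j v) :
    (∀ c, f l c = u ∨ f l c = v) ∨
    ∃ c x : Fin n, x ≠ c ∧ f l c ≠ u ∧ f l c ≠ v ∧
      (∀ a, f i a = u ↔ a = x ∨ a = c) ∧ (∀ b, f j b = v ↔ b = x ∨ b = c) := by
  rw [or_iff_not_imp_left]
  intro hnall
  push_neg at hnall
  obtain ⟨c, hcu, hcv⟩ := hnall
  obtain ⟨a1, a2, ha12, ha1u, ha2u⟩ := exists_two_of_Nc f hu
  obtain ⟨b1, b2, hb12, hb1v, hb2v⟩ := exists_two_of_Nc f hv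
  have core : ∀ a b : Fin n, f i a = u → f j b = v → a ≠ c → b ≠ c → a = b := by
    intro a b hau hbv hac hbc
    by_contra hab
    rcases hW i j l hij hil hjl a b c hab hac hbc with h|h|h
    · rw [hau, hbv] at h; exact huv h
    · rw [hau] at h; exact hcu h.symm
    · rw [hbv] at h; exact hcv h.symm
  -- pick a0 ≠ c with f i a0 = u, b0 ≠ c with f j b0 = v
  obtain ⟨a0, ha0u, ha0c⟩ : ∃ a0, f i a0 = u ∧ a0 ≠ c := by
    rcases eq_or_ne a1 c with rfl|h
    · exact ⟨a2, ha2u, fun h' => ha12 h'.symm⟩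
    · exact ⟨a1, ha1u, h⟩
  obtain ⟨b0, hb0v, hb0c⟩ : ∃ b0, f j b0 = v ∧ b0 ≠ c := by
    rcases eq_or_ne b1 c with rfl|h
    · exact ⟨b2, hb2v, fun h' => hb12 h'.symm⟩
    · exact ⟨b1, hb1v, h⟩
  have hxb0 : a0 = b0 := core a0 b0 ha0u hb0v ha0c hb0c
  have hiu : ∀ a, f i a = u → a = a0 ∨ a = c := by
    intro a hau
    rcases eq_or_ne a c with rfl|hac
    · right; rfl
    · left; rw [hxb0]; exact core a b0 hau hb0v hac hb0c
  have hjv : ∀ b, f j b = v → b = a0 ∨ b = c := by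
    intro b hbv
    rcases eq_or_ne b c with rfl|hbc
    · right; rfl
    · left; exact (core a0 b ha0u hbv ha0c hbc).symm
  -- c itself carries u in row i and v in row j
  have hcu' : f i c = u := by
    rcases hiu a1 ha1u with h1|h1 <;> rcases hiu a2 ha2u with h2|h2
    · exact absurd (h1.trans h2.symm) ha12
    · rwa [← h2]
    · rwa [← h1]
    · exact absurd (h1.trans h2.symm) ha12
  have hcv' : f j c = v := by
    rcases hjv b1 hb1v with h1|h1 <;> rcases hjv b2 hb2v with h2|h2
    · exact absurd (h1.trans h2.symm) hb12
    · rwa [← h2]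
    · rwa [← h1]
    · exact absurd (h1.trans h2.symm) hb12
  refine ⟨c, a0, ha0c, hcu, hcv, ?_, ?_⟩
  · intro a
    constructor
    · exact hiu a
    · rintro (rfl|rfl)
      · exact ha0u
      · exact hcu'
  · intro b
    constructor
    · exact hjv b
    · rintro (rfl|rfl)
      · rw [hxb0]; exact hb0v
      · exact hcv'

include hW hC hn in
/-- case of two distinct plural symbols in two different rows -/
lemma B1 (i j l : Fin 3) (hij : i ≠ j) (hil : i ≠ l) (hjl : j ≠ l) (u v : ℕ)
    (huv : u ≠ v) (hu : 2 ≤ Nc f i u) (hv : 2 ≤ Nc f j v) : False := by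
  have threecontra : (∀ a, f i a = u ∨ f i a = v) → (∀ b, f j b = u ∨ f j b = v) →
      (∀ c, f l c = u ∨ f l c = v) → False := by
    intro h1 h2 h3
    have e1 := row_all_card f huv h1
    have e2 := row_all_card f huv h2
    have e3 := row_all_card f huv h3
    have p1 := cnt_perm f i j l hij hil hjl u
    have p2 := cnt_perm f i j l hij hil hjl v
    have q1 := hC u
    have q2 := hC v
    omega
  rcases Gdich f hW i j l hij hil hjl u v huv hu hv with
    hrowl | ⟨c, x, hxc, hlcu, hlcv, hCiu, hCjv⟩
  · -- row l is contained in {u, v}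
    have hsum_l : Nc f l u + Nc f l v = n := row_all_card f huv hrowl
    rcases (by omega : 3 ≤ Nc f l v ∨ 3 ≤ Nc f l u) with pv | pu
    · rcases Gdich f hW i l j hil hij (Ne.symm hjl) u v huv hu (by omega) with
        hrowj | ⟨c2, x2, hx2, _, _, _, hClv2⟩
      swap
      · have := Nc_le_two f x2 c2 hClv2; omega
      have hsum_j : Nc f j u + Nc f j v = n := row_all_card f huv hrowj
      by_cases hju : 2 ≤ Nc f j u
      · rcases Gdich f hW j l i hjl (Ne.symm hij) (Ne.symm hil) u v huv hju (by omega) with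
          hrowi | ⟨c2, x2, hx2, _, _, _, hClv2⟩
        · exact threecontra hrowi hrowj hrowl
        · have := Nc_le_two f x2 c2 hClv2; omega
      · by_cases hlu : 2 ≤ Nc f l u
        · rcases Gdich f hW l j i (Ne.symm hjl) (Ne.symm hil) (Ne.symm hij) u v huv hlu
            (by omega) with hrowi | ⟨c2, x2, hx2, _, _, _, hCjv2⟩
          · exact threecontra hrowi hrowj hrowl
          · have := Nc_le_two f x2 c2 hCjv2; omega
        · have p2 := cnt_perm f i j l hij hil hjl v
          have q2 := hC v
          omega
    · rcases Gdich f hW l j i (Ne.symm hjl) (Ne.symm hil) (Ne.symm hij) u v huv (by omega) hv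
        with hrowi | ⟨c2, x2, hx2, _, _, hClu2, _⟩
      swap
      · have := Nc_le_two f x2 c2 hClu2; omega
      have hsum_i : Nc f i u + Nc f i v = n := row_all_card f huv hrowi
      by_cases hiv : 2 ≤ Nc f i v
      · rcases Gdich f hW i l j hil hij (Ne.symm hjl) v u (Ne.symm huv) hiv (by omega) with
          hrowj' | ⟨c2, x2, hx2, _, _, _, hClu2⟩
        · exact threecontra hrowi (fun b => (hrowj' b).symm) hrowl
        · have := Nc_le_two f x2 c2 hClu2; omega
      · by_cases hlv : 2 ≤ Nc f l v
        · rcases Gdich f hW i l j hil hij (Ne.symm hjl) u v huv hu hlv with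
            hrowj | ⟨c2, x2, hx2, _, _, hCiu2, _⟩
          · exact threecontra hrowi hrowj hrowl
          · have := Nc_le_two f x2 c2 hCiu2; omega
        · have p1 := cnt_perm f i j l hij hil hjl u
          have q1 := hC u
          omega
  · -- exceptional configuration
    have hfix : f i x = u := (hCiu x).2 (Or.inl rfl)
    have hfic : f i c = u := (hCiu c).2 (Or.inr rfl)
    have hfjx : f j x = v := (hCjv x).2 (Or.inl rfl)
    have hfjc : f j c = v := (hCjv c).2 (Or.inr rfl)
    have hNiu2 : Nc f i u ≤ 2 := Nc_le_two f x c hCiu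
    have hNjv2 : Nc f j v ≤ 2 := Nc_le_two f x c hCjv
    have hbad : ∀ c', f l c' ≠ u → f l c' ≠ v → (c' = x ∨ c' = c) := by
      intro c' h1 h2
      by_contra hcon
      push_neg at hcon
      obtain ⟨hx', hc'⟩ := hcon
      rcases hW i j l hij hil hjl x c c' hxc (Ne.symm hx') (Ne.symm hc') with h|h|h
      · rw [hfix, hfjc] at h; exact huv h
      · rw [hfix] at h; exact h1 h.symm
      · rw [hfjc] at h; exact h2 h.symm
    have hcover : n - 2 ≤ Nc f l u + Nc f l v := by
      have hT := Finset.card_filter_add_card_filter_not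
        (s := (univ : Finset (Fin n))) (p := fun a => f l a = u ∨ f l a = v)
      simp only [card_univ, Fintype.card_fin] at hT
      have hcomp : (univ.filter (fun a => ¬(f l a = u ∨ f l a = v))) ⊆ {x, c} := by
        intro a ha
        simp only [mem_filter, mem_univ, true_and, not_or] at ha
        rcases hbad a ha.1 ha.2 with rfl|rfl <;> simp
      have hcomp2 : (univ.filter (fun a => ¬(f l a = u ∨ f l a = v))).card ≤ 2 :=
        le_trans (Finset.card_le_card hcomp)
          (le_trans (Finset.card_insert_le _ _) (by simp))
      have hun : (univ.filter (fun a => f l a = u ∨ f l a = v)).card ≤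
          Nc f l u + Nc f l v := by
        rw [Finset.filter_or]
        exact Finset.card_union_le _ _
      omega
    have hrows : (∀ a, f i a = u ∨ f i a = v) ∧ (∀ b, f j b = u ∨ f j b = v) := by
      rcases (by omega : 2 ≤ Nc f l u ∨ 2 ≤ Nc f l v) with hlu2 | hlv2
      · rcases Gdich f hW l j i (Ne.symm hjl) (Ne.symm hil) (Ne.symm hij) u v huv hlu2 hv with
          hrowi | ⟨c4, x4, hx4, hic4u, hic4v, hClu4, hCjv4⟩
        swap
        · exfalso
          have h1 : f j c4 = v := (hCjv4 c4).2 (Or.inr rfl)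
          rcases (hCjv c4).1 h1 with rfl|rfl
          · exact hic4u hfix
          · exact hic4u hfic
        have hsum_i : Nc f i u + Nc f i v = n := row_all_card f huv hrowi
        have hNiv : 2 ≤ Nc f i v := by omega
        rcases Gdich f hW i l j hil hij (Ne.symm hjl) v u (Ne.symm huv) hNiv hlu2 with
          hrowj' | ⟨c5, x5, hx5, _, _, hCiv5, _⟩
        · exact ⟨hrowi, fun b => (hrowj' b).symm⟩
        · exfalso
          have := Nc_le_two f x5 c5 hCiv5
          omega
      · rcases Gdich f hW i l j hil hij (Ne.symm hjl) u v huv hu hlv2 with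
          hrowj | ⟨c2, x2, hx2, hjc2u, hjc2v, hCiu2, hClv2⟩
        swap
        · exfalso
          have h1 : f i c2 = u := (hCiu2 c2).2 (Or.inr rfl)
          rcases (hCiu c2).1 h1 with rfl|rfl
          · exact hjc2v hfjx
          · exact hjc2v hfjc
        have hsum_j : Nc f j u + Nc f j v = n := row_all_card f huv hrowj
        have hNju : 2 ≤ Nc f j u := by omega
        rcases Gdich f hW j l i hjl (Ne.symm hij) (Ne.symm hil) u v huv hNju hlv2 with
          hrowi | ⟨c3, x3, hx3, _, _, hCju3, _⟩
        · exact ⟨hrowi, hrowj⟩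
        · exfalso
          have := Nc_le_two f x3 c3 hCju3
          omega
    obtain ⟨hrowi, hrowj⟩ := hrows
    obtain ⟨a, hax, hac⟩ := avoid2 hn x c
    have hfa : f i a = v := by
      rcases hrowi a with h|h
      · rcases (hCiu a).1 h with rfl|rfl
        · exact absurd rfl hax
        · exact absurd rfl hac
      · exact h
    obtain ⟨b, hbx, hbc, hba⟩ := avoid3 hn x c a
    have hfb : f j b = u := by
      rcases hrowj b with h|h
      · exact h
      · rcases (hCjv b).1 h with rfl|rfl
        · exact absurd rfl hbx
        · exact absurd rfl hbc
    rcases hW i j l hij hil hjl a b c (Ne.symm hba) hac hbc with h|h|h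
    · rw [hfa, hfb] at h; exact huv h.symm
    · rw [hfa] at h; exact hlcv h.symm
    · rw [hfb] at h; exact hlcu h.symm

include hW hC hn in
/-- case where `m` is the only plural symbol in every row -/
lemma B2core (m : ℕ) (hNm : ∀ r : Fin 3, 2 ≤ Nc f r m)
    (hdz : ∀ (r : Fin 3) (a b : Fin n), a ≠ b → f r a ≠ m → f r a ≠ f r b)
    (i j l : Fin 3) (hij : i ≠ j) (hil : i ≠ l) (hjl : j ≠ l)
    (hord1 : Sc f j m ≤ Sc f i m) (hord2 : Sc f l m ≤ Sc f j m) : False := by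
  have hSsum : 3 * n + 1 ≤ 2 * (Sc f i m + Sc f j m + Sc f l m) := by
    have p := cnt_perm f i j l hij hil hjl m
    have sp := Sc_perm f i j l hij hil hjl m
    have q := hC m
    have e0 := Sc_add_Nc f 0 m
    have e1 := Sc_add_Nc f 1 m
    have e2 := Sc_add_Nc f 2 m
    have ei := Sc_add_Nc f i m
    have ej := Sc_add_Nc f j m
    have el := Sc_add_Nc f l m
    omega
  have hScn : ∀ r : Fin 3, Sc f r m ≤ n := by
    intro r
    have := Sc_add_Nc f r m
    omega
  have hSin := hScn i
  have hSjn := hScn j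
  have hSln := hScn l
  have hSi3 : 3 ≤ Sc f i m := by omega
  have hSj2 : 2 ≤ Sc f j m := by omega
  set A := univ.filter (fun a => f i a ≠ m) with hA
  set B := univ.filter (fun a => f j a ≠ m) with hB
  have hAcard : A.card = Sc f i m := rfl
  have hBcard : B.card = Sc f j m := rfl
  have hmemA : ∀ a ∈ A, f i a ≠ m := by intro a ha; simpa [hA] using ha
  have hmemB : ∀ b ∈ B, f j b ≠ m := by intro b hb; simpa [hB] using hb
  by_cases hbig : 4 ≤ Sc f i m
  · -- direct construction
    obtain ⟨cl, hcl⟩ : ∃ cl, f l cl = m := exists_of_Nc f (by have := hNm l; omega)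
    have hBe : 0 < (B.erase cl).card := by
      have := Finset.pred_card_le_card_erase (s := B) (a := cl)
      omega
    obtain ⟨b, hb⟩ := Finset.card_pos.1 hBe
    have hbB : b ∈ B := Finset.mem_of_mem_erase hb
    have hbcl : b ≠ cl := Finset.ne_of_mem_erase hb
    have h2 : 2 ≤ ((A.erase b).erase cl).card := by
      have e1 := Finset.pred_card_le_card_erase (s := A) (a := b)
      have e2 := Finset.pred_card_le_card_erase (s := A.erase b) (a := cl)
      omega
    obtain ⟨a1, ha1, a2, ha2, ha12⟩ := Finset.one_lt_card.1 h2
    have ha1A : a1 ∈ A := Finset.mem_of_mem_erase (Finset.mem_of_mem_erase ha1)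
    have ha2A : a2 ∈ A := Finset.mem_of_mem_erase (Finset.mem_of_mem_erase ha2)
    have ha1b : a1 ≠ b := Finset.ne_of_mem_erase (Finset.mem_of_mem_erase ha1)
    have ha2b : a2 ≠ b := Finset.ne_of_mem_erase (Finset.mem_of_mem_erase ha2)
    have ha1cl : a1 ≠ cl := Finset.ne_of_mem_erase ha1
    have ha2cl : a2 ≠ cl := Finset.ne_of_mem_erase ha2
    have hv12 : f i a1 ≠ f i a2 := hdz i a1 a2 ha12 (hmemA a1 ha1A)
    have key : ∃ a, a ∈ A ∧ a ≠ b ∧ a ≠ cl ∧ f i a ≠ f j b := by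
      by_cases hv : f i a1 = f j b
      · exact ⟨a2, ha2A, ha2b, ha2cl, by rw [← hv]; exact fun h => hv12 h.symm⟩
      · exact ⟨a1, ha1A, ha1b, ha1cl, hv⟩
    obtain ⟨a, haA, hab, hacl, hne⟩ := key
    rcases hW i j l hij hil hjl a b cl hab hacl hbcl with h|h|h
    · exact hne h
    · rw [hcl] at h; exact hmemA a haA h
    · rw [hcl] at h; exact hmemB b hbB h
  · -- endgame : n = 5, S i = S j = 3
    have hSi : Sc f i m = 3 := by omega
    have hSl3 : Sc f l m ≤ 3 := by omega
    have hn5 : n = 5 := by omega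
    have hSj : Sc f j m = 3 := by omega
    obtain ⟨c1, c2, hc12, hc1m, hc2m⟩ := exists_two_of_Nc f (hNm l)
    have cross : ∀ (c' : Fin n), f l c' = m → ∀ a ∈ A, ∀ b ∈ B, a ≠ b → a ≠ c' → b ≠ c' →
        f i a = f j b := by
      intro c' hc' a ha b hb hab hac hbc
      by_contra hne
      rcases hW i j l hij hil hjl a b c' hab hac hbc with h|h|h
      · exact hne h
      · rw [hc'] at h; exact hmemA a ha h
      · rw [hc'] at h; exact hmemB b hb h
    by_cases hEx : ∃ b ∈ B.erase c1, 2 ≤ ((A.erase c1).erase b).card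
    · obtain ⟨b, hbB1, h2⟩ := hEx
      obtain ⟨a, ha, a', ha', haa'⟩ := Finset.one_lt_card.1 h2
      have haA : a ∈ A := Finset.mem_of_mem_erase (Finset.mem_of_mem_erase ha)
      have ha'A : a' ∈ A := Finset.mem_of_mem_erase (Finset.mem_of_mem_erase ha')
      have hab : a ≠ b := Finset.ne_of_mem_erase ha
      have ha'b : a' ≠ b := Finset.ne_of_mem_erase ha'
      have hac1 : a ≠ c1 := Finset.ne_of_mem_erase (Finset.mem_of_mem_erase ha)
      have ha'c1 : a' ≠ c1 := Finset.ne_of_mem_erase (Finset.mem_of_mem_erase ha')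
      have hbB : b ∈ B := Finset.mem_of_mem_erase hbB1
      have hbc1 : b ≠ c1 := Finset.ne_of_mem_erase hbB1
      have e1 : f i a = f j b := cross c1 hc1m a haA b hbB hab hac1 hbc1
      have e2 : f i a' = f j b := cross c1 hc1m a' ha'A b hbB ha'b ha'c1 hbc1
      exact hdz i a a' haa' (hmemA a haA) (e1.trans e2.symm)
    · push_neg at hEx
      have hBe1 : 2 ≤ (B.erase c1).card := by
        have := Finset.pred_card_le_card_erase (s := B) (a := c1)
        omega
      obtain ⟨b0, hb0⟩ := Finset.card_pos.1 (by omega : 0 < (B.erase c1).card)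
      have hA1le : (A.erase c1).card ≤ 2 := by
        have h1 := hEx b0 hb0
        have h2 := Finset.pred_card_le_card_erase (s := A.erase c1) (a := b0)
        omega
      have hA1ge : 2 ≤ (A.erase c1).card := by
        have := Finset.pred_card_le_card_erase (s := A) (a := c1)
        omega
      have hc1A : c1 ∈ A := by
        by_contra h
        rw [Finset.erase_eq_of_notMem h] at hA1le
        omega
      have hsub : B.erase c1 ⊆ A.erase c1 := by
        intro b hbm
        by_contra hnb
        have h1 := hEx b hbm
        rw [Finset.erase_eq_of_notMem hnb] at h1
        omega
      have hBA : B.erase c1 = A.erase c1 :=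
        Finset.eq_of_subset_of_card_le hsub (by omega)
      have hc1B : c1 ∈ B := by
        by_contra h
        rw [Finset.erase_eq_of_notMem h] at hBA
        have : B.card = (A.erase c1).card := by rw [hBA]
        omega
      obtain ⟨a3, ha3⟩ := Finset.card_pos.1 (by
        have := Finset.pred_card_le_card_erase (s := A.erase c1) (a := c2)
        omega : 0 < ((A.erase c1).erase c2).card)
      have ha3A1 : a3 ∈ A.erase c1 := Finset.mem_of_mem_erase ha3
      have ha3c2 : a3 ≠ c2 := Finset.ne_of_mem_erase ha3
      have ha3c1 : a3 ≠ c1 := Finset.ne_of_mem_erase ha3A1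
      have ha3A : a3 ∈ A := Finset.mem_of_mem_erase ha3A1
      have ha3B : a3 ∈ B := Finset.mem_of_mem_erase (hBA ▸ ha3A1 : a3 ∈ B.erase c1)
      obtain ⟨a4, ha4⟩ := Finset.card_pos.1 (by
        have := Finset.pred_card_le_card_erase (s := A.erase c1) (a := a3)
        omega : 0 < ((A.erase c1).erase a3).card)
      have ha4A1 : a4 ∈ A.erase c1 := Finset.mem_of_mem_erase ha4
      have ha4a3 : a4 ≠ a3 := Finset.ne_of_mem_erase ha4
      have ha4c1 : a4 ≠ c1 := Finset.ne_of_mem_erase ha4A1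
      have ha4A : a4 ∈ A := Finset.mem_of_mem_erase ha4A1
      have e1 : f i c1 = f j a3 :=
        cross c2 hc2m c1 hc1A a3 ha3B (Ne.symm ha3c1) hc12 ha3c2
      have e2 : f i a4 = f j a3 :=
        cross c1 hc1m a4 ha4A a3 ha3B ha4a3 ha4c1 ha3c1
      exact hdz i c1 a4 (Ne.symm ha4c1) (hmemA c1 hc1A) (e1.trans e2.symm)

end Main
end LT3

theorem stmt_9 (n : ℕ) (hn : 5 ≤ n) (f : Fin 3 → Fin n → ℕ)
    (h : ∀ s : ℕ, (Finset.univ.filter (fun p : Fin 3 × Fin n => f p.1 p.2 = s)).card ≤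
        (3 * n - 1) / 2) :
    ∃ σ : Fin 3 → Fin n, Function.Injective σ ∧
      Function.Injective (fun i => f i (σ i)) := by
  classical
  by_contra hno
  have hW : ∀ i j l : Fin 3, i ≠ j → i ≠ l → j ≠ l → ∀ a b c : Fin n,
      a ≠ b → a ≠ c → b ≠ c → f i a = f j b ∨ f i a = f l c ∨ f j b = f l c := by
    intro i j l hij hil hjl a b c hab hac hbc
    by_contra hcon
    push_neg at hcon
    obtain ⟨h1, h2, h3⟩ := hcon
    set σ : Fin 3 → Fin n := fun r => if r = i then a else if r = j then b else c with hσ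
    have ei : σ i = a := by simp [hσ]
    have ej : σ j = b := by simp [hσ, Ne.symm hij]
    have el : σ l = c := by simp [hσ, Ne.symm hil, Ne.symm hjl]
    refine hno ⟨σ, ?_, ?_⟩
    · intro r r' hrr
      rcases LT3.cover i j l r hij hil hjl with h|h|h <;>
        rcases LT3.cover i j l r' hij hil hjl with h'|h'|h' <;>
        rw [h, h'] at hrr ⊢ <;>
        simp only [ei, ej, el] at hrr <;>
        first
          | rfl
          | exact absurd hrr hab
          | exact absurd hrr hac
          | exact absurd hrr hbc
          | exact absurd hrr.symm hab
          | exact absurd hrr.symm hac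
          | exact absurd hrr.symm hbc
    · intro r r' hrr
      rcases LT3.cover i j l r hij hil hjl with h|h|h <;>
        rcases LT3.cover i j l r' hij hil hjl with h'|h'|h' <;>
        rw [h, h'] at hrr ⊢ <;>
        simp only [ei, ej, el] at hrr <;>
        first
          | rfl
          | exact absurd hrr h1
          | exact absurd hrr h2
          | exact absurd hrr h3
          | exact absurd hrr.symm h1
          | exact absurd hrr.symm h2
          | exact absurd hrr.symm h3
  have hkey : ∀ s : ℕ, (Finset.univ.filter (fun p : Fin 3 × Fin n => f p.1 p.2 = s)).card =
      LT3.Nc f 0 s + LT3.Nc f 1 s + LT3.Nc f 2 s := by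
    intro s
    rw [Finset.card_eq_sum_card_fiberwise
      (f := Prod.fst) (t := (Finset.univ : Finset (Fin 3))) (fun x _ => Finset.mem_univ _)]
    have hfib : ∀ i : Fin 3,
        ((Finset.univ.filter (fun p : Fin 3 × Fin n => f p.1 p.2 = s)).filter
          (fun p => p.1 = i)) =
        {i} ×ˢ (Finset.univ.filter (fun a => f i a = s)) := by
      intro i
      ext p
      simp only [Finset.mem_filter, Finset.mem_univ, true_and, Finset.mem_product,
        Finset.mem_singleton]
      constructor
      · rintro ⟨hp, hi⟩
        exact ⟨hi, by rw [← hi]; exact hp⟩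
      · rintro ⟨hi, hv⟩
        exact ⟨by rw [hi]; exact hv, hi⟩
    rw [Fin.sum_univ_three, hfib 0, hfib 1, hfib 2]
    simp [LT3.Nc, Finset.card_product]
  have hC : ∀ s : ℕ, 2 * (LT3.Nc f 0 s + LT3.Nc f 1 s + LT3.Nc f 2 s) ≤ 3 * n - 1 := by
    intro s
    have h1 := h s
    have h2 := hkey s
    omega
  have hothers : ∀ r : Fin 3, ∃ i' j' : Fin 3, r ≠ i' ∧ r ≠ j' ∧ i' ≠ j' := by decide
  have hthird : ∀ i j : Fin 3, i ≠ j → ∃ l : Fin 3, i ≠ l ∧ j ≠ l := by decide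
  by_cases hconst : ∃ r : Fin 3, ∀ a b : Fin n, f r a = f r b
  · obtain ⟨r, hr⟩ := hconst
    obtain ⟨i', j', hi, hj, hij'⟩ := hothers r
    exact LT3.const_case f hW hC hn i' j' r hij' (Ne.symm hi) (Ne.symm hj) hr
  push_neg at hconst
  by_cases hinj : ∃ r : Fin 3, ∀ a b : Fin n, a ≠ b → f r a ≠ f r b
  · obtain ⟨r, hr⟩ := hinj
    obtain ⟨i', j', hi, hj, hij'⟩ := hothers r
    exact LT3.inj_case f hW hC hn r i' j' hi hj hij' hr
  push_neg at hinj
  have hpl : ∀ r : Fin 3, ∃ u, 2 ≤ LT3.Nc f r u := by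
    intro r
    obtain ⟨a, b, hab, he⟩ := hinj r
    exact ⟨f r a, LT3.two_le_Nc f a b hab rfl he.symm⟩
  by_cases hB1c : ∃ (i j : Fin 3) (u v : ℕ),
      i ≠ j ∧ u ≠ v ∧ 2 ≤ LT3.Nc f i u ∧ 2 ≤ LT3.Nc f j v
  · obtain ⟨i, j, u, v, hij', huv, hu, hv⟩ := hB1c
    obtain ⟨l, hl1, hl2⟩ := hthird i j hij'
    exact LT3.B1 f hW hC hn i j l hij' hl1 hl2 u v huv hu hv
  push_neg at hB1c
  have hm' : ∀ (i j : Fin 3) (u v : ℕ), i ≠ j →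
      2 ≤ LT3.Nc f i u → 2 ≤ LT3.Nc f j v → u = v := by
    intro i j u v hij' hu hv
    by_contra huv
    have := hB1c i j u v hij' huv hu
    omega
  obtain ⟨m, hm0⟩ := hpl 0
  obtain ⟨m1, hm1⟩ := hpl 1
  have hNm : ∀ r : Fin 3, 2 ≤ LT3.Nc f r m := by
    intro r
    obtain ⟨u, hu⟩ := hpl r
    rcases eq_or_ne r 0 with rfl|hr
    · have e1 : u = m1 := hm' 0 1 u m1 (by decide) hu hm1
      have e2 : m = m1 := hm' 0 1 m m1 (by decide) hm0 hm1
      rw [e1, ← e2] at hu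
      exact hu
    · rwa [← hm' r 0 u m hr hu hm0]
  have hdz : ∀ (r : Fin 3) (a b : Fin n), a ≠ b → f r a ≠ m → f r a ≠ f r b := by
    intro r a b hab hnm he
    have h2 : 2 ≤ LT3.Nc f r (f r a) := LT3.two_le_Nc f a b hab rfl he.symm
    rcases eq_or_ne r 0 with rfl|hr
    · have e1 : f 0 a = m1 := hm' 0 1 _ m1 (by decide) h2 hm1
      have e2 : m = m1 := hm' 0 1 m m1 (by decide) hm0 hm1
      exact hnm (e1.trans e2.symm)
    · exact hnm (hm' r 0 (f r a) m hr h2 hm0)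
  obtain ⟨i, j, l, hij', hil', hjl', ho1, ho2⟩ :
      ∃ i j l : Fin 3, i ≠ j ∧ i ≠ l ∧ j ≠ l ∧
        LT3.Sc f j m ≤ LT3.Sc f i m ∧ LT3.Sc f l m ≤ LT3.Sc f j m := by
    rcases le_total (LT3.Sc f 0 m) (LT3.Sc f 1 m) with h01|h01 <;>
      rcases le_total (LT3.Sc f 0 m) (LT3.Sc f 2 m) with h02|h02 <;>
      rcases le_total (LT3.Sc f 1 m) (LT3.Sc f 2 m) with h12|h12
    · exact ⟨2, 1, 0, by decide, by decide, by decide, h12, h01⟩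
    · exact ⟨1, 2, 0, by decide, by decide, by decide, h12, h02⟩
    · exact ⟨1, 0, 2, by decide, by decide, by decide, h01, h02⟩
    · exact ⟨1, 0, 2, by decide, by decide, by decide, h01, h02⟩
    · exact ⟨2, 0, 1, by decide, by decide, by decide, h02, h01⟩
    · exact ⟨0, 1, 2, by decide, by decide, by decide, h01, h12⟩
    · exact ⟨0, 2, 1, by decide, by decide, by decide, h02, h12⟩
    · exact ⟨0, 1, 2, by decide, by decide, by decide, h01, h12⟩
  exact LT3.B2core f hW hC hn m hNm hdz i j l hij' hil' hjl' ho1 ho2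
end

section
/- Let n ≥ 5 be an integer. Then there exists a 3-by-n array in which each symbol appears at most ⌊(3n - 1)/2⌋ + 1 times and which has no latin transversal. (Equivalently, L(3,n) ≤ ⌊(3n - 1)/2⌋ for n ≥ 5; combined with the lower bound this gives L(3,n) = ⌊(3n - 1)/2⌋.) -/
lemma parity_count (s N : ℕ) :
    ((Finset.range N).filter (fun k => k % 2 = s)).card =
      if s = 0 then (N + 1) / 2 else if s = 1 then N / 2 else 0 := by
  induction N with
  | zero => simp
  | succ N ih =>
    rw [Finset.range_add_one, Finset.filter_insert]
    by_cases h : N % 2 = s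
    · rw [if_pos h, Finset.card_insert_of_notMem (by simp), ih]
      split_ifs <;> omega
    · rw [if_neg h, ih]
      split_ifs <;> omega

theorem stmt_10 (n : ℕ) (hn : 5 ≤ n) :
    ∃ f : Fin 3 → Fin n → ℕ,
      (∀ s : ℕ, (Finset.univ.filter (fun p : Fin 3 × Fin n => f p.1 p.2 = s)).card ≤
          (3 * n - 1) / 2 + 1) ∧
      ¬ ∃ σ : Fin 3 → Fin n, Function.Injective σ ∧
          Function.Injective (fun i => f i (σ i)) := by
  refine ⟨fun i j => (j.val + n * i.val) % 2, ?_, ?_⟩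
  · intro s
    have hb : ((Finset.range (3 * n)).filter (fun k => k % 2 = s)).card ≤ (3 * n - 1) / 2 + 1 := by
      rw [parity_count]
      split_ifs <;> omega
    refine le_trans (le_of_eq ?_) hb
    apply Finset.card_bij (fun p _ => p.2.val + n * p.1.val)
    · rintro ⟨i, j⟩ hp
      simp only [Finset.mem_filter, Finset.mem_univ, true_and] at hp ⊢
      simp only [Finset.mem_range]
      refine ⟨?_, hp⟩
      have h1 : j.val < n := j.isLt
      have h2 : i.val < 3 := i.isLt
      nlinarith
    · rintro ⟨i1, j1⟩ _ ⟨i2, j2⟩ _ h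
      simp only at h
      have hn0 : 0 < n := by omega
      have hi : i1.val = i2.val := by
        have e1 : (j1.val + n * i1.val) / n = i1.val := by
          rw [Nat.add_mul_div_left _ _ hn0, Nat.div_eq_of_lt j1.isLt, Nat.zero_add]
        have e2 : (j2.val + n * i2.val) / n = i2.val := by
          rw [Nat.add_mul_div_left _ _ hn0, Nat.div_eq_of_lt j2.isLt, Nat.zero_add]
        rw [← e1, ← e2, h]
      have hj : j1.val = j2.val := by
        have e1 : (j1.val + n * i1.val) % n = j1.val := by
          rw [Nat.add_mul_mod_self_left, Nat.mod_eq_of_lt j1.isLt]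
        have e2 : (j2.val + n * i2.val) % n = j2.val := by
          rw [Nat.add_mul_mod_self_left, Nat.mod_eq_of_lt j2.isLt]
        rw [← e1, ← e2, h]
      ext <;> simp [hi, hj]
    · intro k hk
      simp only [Finset.mem_filter, Finset.mem_range] at hk
      have hn0 : 0 < n := by omega
      refine ⟨(⟨k / n, (Nat.div_lt_iff_lt_mul hn0).mpr (by omega)⟩, ⟨k % n, Nat.mod_lt _ hn0⟩), ?_, ?_⟩
      · simp only [Finset.mem_filter, Finset.mem_univ, true_and]
        simpa [Nat.mod_add_div] using hk.2
      · simp [Nat.mod_add_div]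
  · rintro ⟨σ, _, hinj⟩
    have v : ∀ i : Fin 3, ((σ i).val + n * i.val) % 2 < 2 := fun i => Nat.mod_lt _ (by norm_num)
    have h01 := hinj (a₁ := 0) (a₂ := 1)
    have h02 := hinj (a₁ := 0) (a₂ := 2)
    have h12 := hinj (a₁ := 1) (a₂ := 2)
    simp only at h01 h02 h12
    have v0 := v 0; have v1 := v 1; have v2 := v 2
    have e0 : (0:Fin 3) ≠ 1 := by decide
    have : ((σ 0).val + n * (0:Fin 3).val) % 2 ≠ ((σ 1).val + n * (1:Fin 3).val) % 2 := by
      intro h; exact e0 (h01 h)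
    have h2 : ((σ 0).val + n * (0:Fin 3).val) % 2 ≠ ((σ 2).val + n * (2:Fin 3).val) % 2 := by
      intro h; exact (by decide : (0:Fin 3) ≠ 2) (h02 h)
    have h3 : ((σ 1).val + n * (1:Fin 3).val) % 2 ≠ ((σ 2).val + n * (2:Fin 3).val) % 2 := by
      intro h; exact (by decide : (1:Fin 3) ≠ 2) (h12 h)
    omega
end

section
/- Let m, n, k be positive integers with 2 ≤ m ≤ n and (m - 1)·k ≤ n - 1. Then every m-by-n array in which each symbol appears at most k times has a latin transversal. (Equivalently, L(m,n) ≥ ⌊(n - 1)/(m - 1)⌋.) -/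
theorem stmt_12 (m n k : ℕ) (hk : 0 < k) (hm : 2 ≤ m) (hmn : m ≤ n)
    (hbound : (m - 1) * k ≤ n - 1) (f : Fin m → Fin n → ℕ)
    (h : ∀ s : ℕ, (Finset.univ.filter (fun p : Fin m × Fin n => f p.1 p.2 = s)).card ≤ k) :
    ∃ σ : Fin m → Fin n, Function.Injective σ ∧
      Function.Injective (fun i => f i (σ i)) := by
  suffices H : ∀ i, ∀ hi : i ≤ m, ∃ σ : Fin i → Fin n, Function.Injective σ ∧
      Function.Injective (fun j => f (Fin.castLE hi j) (σ j)) by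
    obtain ⟨σ, h1, h2⟩ := H m le_rfl
    exact ⟨σ, h1, by simpa using h2⟩
  intro i
  induction i with
  | zero => exact fun _ => ⟨Fin.elim0, fun x => x.elim0, fun x => x.elim0⟩
  | succ i ih =>
    intro hi
    have hi' : i ≤ m := Nat.le_of_succ_le hi
    have hir : i < m := hi
    obtain ⟨σ, hσinj, hfinj⟩ := ih hi'
    set r : Fin m := ⟨i, hir⟩ with hr
    set F : Finset (Fin n) := Finset.univ.filter
      (fun c => ∃ j : Fin i, σ j = c ∨ f r c = f (Fin.castLE hi' j) (σ j)) with hF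
    -- each per-symbol row filter has card ≤ k - 1
    have hTj : ∀ j : Fin i,
        (Finset.univ.filter (fun c => f r c = f (Fin.castLE hi' j) (σ j))).card ≤ k - 1 := by
      intro j
      set s := f (Fin.castLE hi' j) (σ j) with hs
      set S : Finset (Fin m × Fin n) :=
        Finset.univ.filter (fun p : Fin m × Fin n => f p.1 p.2 = s) with hS
      set p0 : Fin m × Fin n := (Fin.castLE hi' j, σ j) with hp0
      have hp0S : p0 ∈ S := by simp [hS, hp0, hs]
      set T : Finset (Fin n) := Finset.univ.filter (fun c => f r c = s) with hT
      have himg : T.image (fun c => (r, c)) ⊆ S.erase p0 := by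
        intro p hp
        simp only [Finset.mem_image, hT, Finset.mem_filter, Finset.mem_univ, true_and] at hp
        obtain ⟨c, hc, rfl⟩ := hp
        refine Finset.mem_erase.2 ⟨?_, by simp [hS, hc]⟩
        intro hcontra
        have : r = Fin.castLE hi' j := congrArg Prod.fst hcontra
        have : (i : ℕ) = (j : ℕ) := congrArg Fin.val this
        omega
      have hcardT : T.card = (T.image (fun c => (r, c))).card :=
        (Finset.card_image_of_injective T (fun a b hab => congrArg Prod.snd hab)).symm
      calc T.card = (T.image (fun c => (r, c))).card := hcardT
        _ ≤ (S.erase p0).card := Finset.card_le_card himg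
        _ = S.card - 1 := Finset.card_erase_of_mem hp0S
        _ ≤ k - 1 := Nat.sub_le_sub_right (h s) 1
    -- bound card F
    have hFsub : F ⊆ (Finset.univ.image σ) ∪
        Finset.univ.biUnion (fun j : Fin i =>
          Finset.univ.filter (fun c => f r c = f (Fin.castLE hi' j) (σ j))) := by
      intro c hc
      simp only [hF, Finset.mem_filter, Finset.mem_univ, true_and] at hc
      obtain ⟨j, hj | hj⟩ := hc
      · exact Finset.mem_union_left _ (Finset.mem_image.2 ⟨j, Finset.mem_univ _, hj⟩)
      · exact Finset.mem_union_right _ (Finset.mem_biUnion.2 ⟨j, Finset.mem_univ _, by simp [hj]⟩)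
    have hFcard : F.card ≤ i * k := by
      have h1 : (Finset.univ.image σ).card ≤ i := by
        simpa using Finset.card_image_le (s := (Finset.univ : Finset (Fin i))) (f := σ)
      have h2 : (Finset.univ.biUnion (fun j : Fin i =>
          Finset.univ.filter (fun c => f r c = f (Fin.castLE hi' j) (σ j)))).card
          ≤ i * (k - 1) := by
        calc _ ≤ ∑ j : Fin i, (Finset.univ.filter
              (fun c => f r c = f (Fin.castLE hi' j) (σ j))).card :=
            Finset.card_biUnion_le
          _ ≤ ∑ _j : Fin i, (k - 1) := Finset.sum_le_sum (fun j _ => hTj j)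
          _ = i * (k - 1) := by simp [mul_comm]
      calc F.card ≤ _ := Finset.card_le_card hFsub
        _ ≤ (Finset.univ.image σ).card + _ := Finset.card_union_le _ _
        _ ≤ i + i * (k - 1) := Nat.add_le_add h1 h2
        _ = i * k := by cases k with | zero => omega | succ k => rw [Nat.succ_sub_one, Nat.mul_succ]; omega
    have hFlt : F.card < n := by
      have : i * k ≤ (m - 1) * k := Nat.mul_le_mul_right k (by omega)
      omega
    have : ∃ c : Fin n, c ∉ F := by
      by_contra h'
      push_neg at h'
      have : F = Finset.univ := Finset.eq_univ_iff_forall.2 h'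
      rw [this] at hFlt
      simp at hFlt
    obtain ⟨c, hc⟩ := this
    have hkey : ∀ j : Fin i, σ j ≠ c ∧ f r c ≠ f (Fin.castLE hi' j) (σ j) := by
      intro j
      simp only [hF, Finset.mem_filter, Finset.mem_univ, true_and, not_exists, not_or] at hc
      exact hc j
    have hcastLE : ∀ j : Fin i, Fin.castLE hi (Fin.castSucc j) = Fin.castLE hi' j := by
      intro j; ext; simp
    have hlast : Fin.castLE hi (Fin.last i) = r := by ext; simp [hr]
    refine ⟨Fin.snoc σ c, ?_, ?_⟩
    · intro x y hxy
      induction x using Fin.lastCases with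
      | last =>
        induction y using Fin.lastCases with
        | last => rfl
        | cast y =>
          rw [Fin.snoc_last, Fin.snoc_castSucc] at hxy
          exact absurd hxy.symm (hkey y).1
      | cast x =>
        induction y using Fin.lastCases with
        | last =>
          rw [Fin.snoc_last, Fin.snoc_castSucc] at hxy
          exact absurd hxy (hkey x).1
        | cast y =>
          rw [Fin.snoc_castSucc, Fin.snoc_castSucc] at hxy
          exact congrArg Fin.castSucc (hσinj hxy)
    · intro x y hxy
      simp only at hxy
      induction x using Fin.lastCases with
      | last =>
        induction y using Fin.lastCases with
        | last => rfl
        | cast y =>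
          rw [Fin.snoc_last, Fin.snoc_castSucc, hlast, hcastLE] at hxy
          exact absurd hxy (hkey y).2
      | cast x =>
        induction y using Fin.lastCases with
        | last =>
          rw [Fin.snoc_last, Fin.snoc_castSucc, hlast, hcastLE] at hxy
          exact absurd hxy.symm (hkey x).2
        | cast y =>
          rw [Fin.snoc_castSucc, Fin.snoc_castSucc, hcastLE, hcastLE] at hxy
          exact congrArg Fin.castSucc (hfinj hxy)
end
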